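/- arXiv:1301.7597 — 7 statements merged into one kernel-verified Lean document; each statement's English description precedes it below -/
import Mathlib

section
/- Let G be a factorizable graph, M a perfect matching of G, and u, v ∈ V(G). Then G − u − v has a perfect matching if and only if there is an M-saturated path of G between u and v. -/
open SimpleGraph

variable {V : Type*}

/-- `M` is a matching of `G`, given as a set of edges. -/
def IsMatchingSet (G : SimpleGraph V) (M : Set (Sym2 V)) : Prop :=
  M ⊆ G.edgeSet ∧ ∀ (v : V), ∀ e ∈ M, ∀ f ∈ M, v ∈ e → v ∈ f → e = f

/-- `M` is a perfect matching of `G`: every vertex lies on exactly one edge of `M`. -/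
def IsPerfectMatchingSet (G : SimpleGraph V) (M : Set (Sym2 V)) : Prop :=
  M ⊆ G.edgeSet ∧ ∀ v : V, ∃! e, e ∈ M ∧ v ∈ e

/-- `M` is a maximum matching of `G`. -/
def IsMaximumMatchingSet (G : SimpleGraph V) (M : Set (Sym2 V)) : Prop :=
  IsMatchingSet G M ∧ ∀ M', IsMatchingSet G M' → M'.ncard ≤ M.ncard

/-- `v` is exposed by the matching `M`. -/
def ExposedBy (M : Set (Sym2 V)) (v : V) : Prop := ∀ e ∈ M, v ∉ e

/-- The Gallai–Edmonds set `D(G)`: vertices missed by some maximum matching. -/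
def Dset (G : SimpleGraph V) : Set V :=
  {v | ∃ M, IsMaximumMatchingSet G M ∧ ExposedBy M v}

/-- `A(G) = Γ_G(D(G))`, the neighbors of `D(G)` outside `D(G)`. -/
def Aset (G : SimpleGraph V) : Set V :=
  {v | v ∉ Dset G ∧ ∃ u ∈ Dset G, G.Adj u v}

/-- `C(G) = V(G) \ (D(G) ∪ A(G))`. -/
def Cset (G : SimpleGraph V) : Set V :=
  {v | v ∉ Dset G ∧ v ∉ Aset G}

/-- A graph is factorizable if it has a perfect matching. -/
def Factorizable (G : SimpleGraph V) : Prop := ∃ M, IsPerfectMatchingSet G M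

/-- A walk is `M`-alternating if its edges alternate between `M` and its complement. -/
def IsAltWalk {G : SimpleGraph V} {u v : V} (M : Set (Sym2 V)) (p : G.Walk u v) : Prop :=
  List.Chain' (fun e f => e ∈ M ↔ f ∉ M) p.edges

/-- An `M`-balanced path from `u` to `v`: an even `M`-alternating path whose matching
edges form a near-perfect matching of the path exposing only `v` (first edge is in `M`). -/
def IsBalancedPath {G : SimpleGraph V} {u v : V} (M : Set (Sym2 V)) (p : G.Walk u v) : Prop :=
  p.IsPath ∧ Even p.length ∧ IsAltWalk M p ∧ ∀ e, p.edges.head? = some e → e ∈ M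

/-- An `M`-saturated path: odd `M`-alternating, matching edges perfectly cover the path. -/
def IsSaturatedPath {G : SimpleGraph V} {u v : V} (M : Set (Sym2 V)) (p : G.Walk u v) : Prop :=
  p.IsPath ∧ Odd p.length ∧ IsAltWalk M p ∧ ∀ e, p.edges.head? = some e → e ∈ M

/-- An `M`-exposed path: odd `M`-alternating, non-matching edges perfectly cover the path. -/
def IsExposedPath {G : SimpleGraph V} {u v : V} (M : Set (Sym2 V)) (p : G.Walk u v) : Prop :=
  p.IsPath ∧ Odd p.length ∧ IsAltWalk M p ∧ ∀ e, p.edges.head? = some e → e ∉ M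

/-- The allowed edges of `G`: edges lying in some perfect matching. -/
def allowedEdges (G : SimpleGraph V) : Set (Sym2 V) :=
  {e | ∃ M, IsPerfectMatchingSet G M ∧ e ∈ M}

/-- `u` and `v` lie in the same factor-connected component of `G`. -/
def SameFC (G : SimpleGraph V) (u v : V) : Prop :=
  (SimpleGraph.fromEdgeSet (allowedEdges G)).Reachable u v

/-- `X` is separating: every factor-connected component lies inside `X` or misses `X`. -/
def IsSeparating (G : SimpleGraph V) (X : Set V) : Prop :=
  ∀ u v : V, SameFC G u v → (u ∈ X ↔ v ∈ X)

/-- A factorizable graph `G` is saturated if adding any non-edge strictly increases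
the number of perfect matchings. -/
def Saturated (G : SimpleGraph V) : Prop :=
  Factorizable G ∧ ∀ x y : V, x ≠ y → ¬ G.Adj x y →
    {N | IsPerfectMatchingSet G N}.ncard <
      {N | IsPerfectMatchingSet (G ⊔ SimpleGraph.fromEdgeSet {s(x, y)}) N}.ncard



section AuxLemmas

variable {G : SimpleGraph V} {M : Set (Sym2 V)}

/-- A matching of `G` covering exactly the vertex set `S`. -/
def MatchCover (G : SimpleGraph V) (N : Set (Sym2 V)) (S : Set V) : Prop :=
  N ⊆ G.edgeSet ∧ (∀ x : V, ∀ e ∈ N, ∀ f ∈ N, x ∈ e → x ∈ f → e = f) ∧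
    (∀ e ∈ N, ∀ x ∈ e, x ∈ S) ∧ (∀ x ∈ S, ∃ e ∈ N, x ∈ e)

lemma pm_unique (hM : IsPerfectMatchingSet G M) {x : V} {e f : Sym2 V}
    (he : e ∈ M) (hf : f ∈ M) (hxe : x ∈ e) (hxf : x ∈ f) : e = f := by
  obtain ⟨g, _, hg⟩ := hM.2 x
  rw [hg e ⟨he, hxe⟩, hg f ⟨hf, hxf⟩]

lemma pm_partner (hM : IsPerfectMatchingSet G M) (x : V) :
    ∃ y, G.Adj x y ∧ s(x, y) ∈ M := by
  obtain ⟨e, ⟨heM, hxe⟩, _⟩ := hM.2 x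
  obtain ⟨y, rfl⟩ := Sym2.mem_iff_exists.mp hxe
  exact ⟨y, (G.mem_edgeSet).mp (hM.1 heM), heM⟩

lemma mem_support_of_mem_edges' {a b x : V} {q : G.Walk a b} {e : Sym2 V}
    (he : e ∈ q.edges) (hx : x ∈ e) : x ∈ q.support := by
  obtain ⟨y, rfl⟩ := Sym2.mem_iff_exists.mp hx
  exact Walk.fst_mem_support_of_mem_edges q he

lemma two_incident_edges {a b x : V} {p : G.Walk a b} (hp : p.IsPath)
    (hx : x ∈ p.support) (hxa : x ≠ a) (hxb : x ≠ b) :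
    ∃ e ∈ p.edges, ∃ f ∈ p.edges, e ≠ f ∧ x ∈ e ∧ x ∈ f := by
  classical
  have hspec := p.take_spec hx
  have hedges : p.edges = (p.takeUntil x hx).edges ++ (p.dropUntil x hx).edges := by
    conv_lhs => rw [← hspec]
    exact Walk.edges_append _ _
  have hqnil : ¬ (p.takeUntil x hx).reverse.Nil := by
    rw [Walk.nil_iff_length_eq, Walk.length_reverse]
    intro h
    exact hxa (Walk.eq_of_length_eq_zero h).symm
  obtain ⟨y, hy, q', hq'⟩ := Walk.not_nil_iff.mp hqnil
  have he1 : s(x, y) ∈ (p.takeUntil x hx).edges := by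
    have : s(x, y) ∈ (p.takeUntil x hx).reverse.edges := by
      rw [hq', Walk.edges_cons]; exact List.mem_cons_self
    rwa [Walk.edges_reverse, List.mem_reverse] at this
  have hrnil : ¬ (p.dropUntil x hx).Nil := by
    rw [Walk.nil_iff_length_eq]
    intro h
    exact hxb (Walk.eq_of_length_eq_zero h)
  obtain ⟨z, hz, r', hr'⟩ := Walk.not_nil_iff.mp hrnil
  have he2 : s(x, z) ∈ (p.dropUntil x hx).edges := by
    rw [hr', Walk.edges_cons]; exact List.mem_cons_self
  have hnd : p.edges.Nodup := hp.edges_nodup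
  rw [hedges] at hnd
  have hdisj := List.disjoint_of_nodup_append hnd
  refine ⟨s(x, y), ?_, s(x, z), ?_, ?_, ?_, ?_⟩
  · rw [hedges]; exact List.mem_append_left _ he1
  · rw [hedges]; exact List.mem_append_right _ he2
  · intro h
    exact hdisj he1 (h ▸ he2)
  · simp
  · simp

lemma bridge_mp {S : Set V} (h : Factorizable (G.induce S)) : ∃ N, MatchCover G N S := by
  obtain ⟨M', hsub, hex⟩ := h
  refine ⟨Sym2.map Subtype.val '' M', ?_, ?_, ?_, ?_⟩
  · rintro e ⟨f, hf, rfl⟩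
    induction f using Sym2.inductionOn with
    | hf a b =>
      have : (G.induce S).Adj a b := (SimpleGraph.mem_edgeSet _).mp (hsub hf)
      rw [Sym2.map_pair_eq, SimpleGraph.mem_edgeSet]
      exact (SimpleGraph.comap_adj.mp this : G.Adj a.val b.val)
  · rintro x e ⟨e', he', rfl⟩ f ⟨f', hf', rfl⟩ hxe hxf
    obtain ⟨a, hae, ha⟩ := Sym2.mem_map.mp hxe
    obtain ⟨b, hbf, hb⟩ := Sym2.mem_map.mp hxf
    have hba : b = a := Subtype.ext (hb.trans ha.symm)
    subst hba
    obtain ⟨g, _, hg⟩ := hex b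
    rw [hg e' ⟨he', hae⟩, hg f' ⟨hf', hbf⟩]
  · rintro e ⟨f, hf, rfl⟩ x hx
    obtain ⟨a, _, rfl⟩ := Sym2.mem_map.mp hx
    exact a.2
  · intro x hx
    obtain ⟨e, ⟨he, hxe⟩, _⟩ := hex ⟨x, hx⟩
    exact ⟨_, ⟨e, he, rfl⟩, Sym2.mem_map.mpr ⟨⟨x, hx⟩, hxe, rfl⟩⟩

lemma bridge_mpr {N : Set (Sym2 V)} {S : Set V} (h : MatchCover G N S) :
    Factorizable (G.induce S) := by
  obtain ⟨hsub, huniq, hin, hcov⟩ := h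
  refine ⟨{e : Sym2 S | Sym2.map Subtype.val e ∈ N}, ?_, ?_⟩
  · intro e he
    induction e using Sym2.inductionOn with
    | hf a b =>
      simp only [Set.mem_setOf_eq, Sym2.map_pair_eq] at he
      rw [SimpleGraph.mem_edgeSet]
      exact SimpleGraph.comap_adj.mpr ((G.mem_edgeSet).mp (hsub he))
  · intro x
    obtain ⟨e, heN, hxe⟩ := hcov x.val x.2
    obtain ⟨y, rfl⟩ := Sym2.mem_iff_exists.mp hxe
    have hy : y ∈ S := hin _ heN y (by simp)
    refine ⟨s(x, ⟨y, hy⟩), ⟨?_, ?_⟩, ?_⟩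
    · simpa [Sym2.map_pair_eq] using heN
    · simp
    · rintro f ⟨hfN, hxf⟩
      have hmap : Sym2.map Subtype.val f = s(x.val, y) := by
        refine huniq x.val _ hfN _ heN ?_ (by simp)
        exact Sym2.mem_map.mpr ⟨x, hxf, rfl⟩
      apply Sym2.map.injective Subtype.val_injective
      rw [hmap, Sym2.map_pair_eq]

lemma fwd [Finite V] (hM : IsPerfectMatchingSet G M) :
    ∀ (n : ℕ) (N : Set (Sym2 V)) (u v : V), u ≠ v → MatchCover G N ({u, v}ᶜ : Set V) →
      (N \ M).ncard ≤ n →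
      ∃ p : G.Walk u v, IsSaturatedPath M p ∧ ∀ e ∈ p.edges, e ∈ M ∪ N := by
  intro n
  induction n using Nat.strong_induction_on with
  | _ n IH =>
  intro N u v huv hN hcard
  obtain ⟨u', hadj, hMu⟩ := pm_partner hM u
  have hune : u ≠ u' := hadj.ne
  by_cases hu'v : u' = v
  · subst hu'v
    refine ⟨Walk.cons hadj Walk.nil, ⟨?_, ?_, ?_, ?_⟩, ?_⟩
    · simp [Walk.isPath_def, huv]
    · simp
    · simp [IsAltWalk, List.Chain']
    · intro e he
      simp only [Walk.edges_cons, Walk.edges_nil, List.head?] at he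
      cases he
      exact hMu
    · intro e he
      simp only [Walk.edges_cons, Walk.edges_nil, List.mem_singleton] at he
      subst he
      exact Or.inl hMu
  · obtain ⟨hNsub, hNuniq, hNin, hNcov⟩ := hN
    have hu'S : u' ∈ ({u, v}ᶜ : Set V) := by simp [not_or, hune.symm, hu'v]
    obtain ⟨f, hfN, hu'f⟩ := hNcov u' hu'S
    obtain ⟨u'', rfl⟩ := Sym2.mem_iff_exists.mp hu'f
    have hadj2 : G.Adj u' u'' := (G.mem_edgeSet).mp (hNsub hfN)
    have hu''S : u'' ∈ ({u, v}ᶜ : Set V) := hNin _ hfN u'' (by simp)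
    have hu'' : u'' ≠ u ∧ u'' ≠ v := by simpa [not_or] using hu''S
    have hfM : s(u', u'') ∉ M := by
      intro hmem
      have heq : s(u, u') = s(u', u'') := pm_unique (x := u') hM hMu hmem (by simp) (by simp)
      rw [Sym2.eq_iff] at heq
      rcases heq with ⟨h1, h2⟩ | ⟨h1, h2⟩
      · exact hune h1
      · exact hu''.1 h1.symm
    set N₂ : Set (Sym2 V) := insert s(u, u') (N \ {s(u', u'')}) with hN₂def
    have hMuu' : ∀ e ∈ M, u ∈ e → e = s(u, u') := fun e he hx =>
      pm_unique hM he hMu hx (by simp)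
    have hMu'e : ∀ e ∈ M, u' ∈ e → e = s(u, u') := fun e he hx =>
      pm_unique hM he hMu hx (by simp)
    have hNu'e : ∀ e ∈ N, u' ∈ e → e = s(u', u'') := fun e he hx =>
      hNuniq u' e he _ hfN hx (by simp)
    have hNu''e : ∀ e ∈ N, u'' ∈ e → e = s(u', u'') := fun e he hx =>
      hNuniq u'' e he _ hfN hx (by simp)
    have hNu : ∀ e ∈ N, u ∉ e := fun e he hx => by
      have := hNin e he u hx; simp at this
    have hNv : ∀ e ∈ N, v ∉ e := fun e he hx => by
      have := hNin e he v hx; simp at this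
    have hMC2 : MatchCover G N₂ ({u'', v}ᶜ : Set V) := by
      refine ⟨?_, ?_, ?_, ?_⟩
      · rintro e (rfl | ⟨he, -⟩)
        · exact (G.mem_edgeSet).mpr hadj
        · exact hNsub he
      · rintro x e (rfl | ⟨he, hef⟩) g (rfl | ⟨hg, hgf⟩) hxe hxg
        · rfl
        · exfalso
          rcases Sym2.mem_iff.mp hxe with rfl | rfl
          · exact hNu g hg hxg
          · exact hgf (hNu'e g hg hxg)
        · exfalso
          rcases Sym2.mem_iff.mp hxg with rfl | rfl
          · exact hNu e he hxe
          · exact hef (hNu'e e he hxe)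
        · exact hNuniq x e he g hg hxe hxg
      · rintro e (rfl | ⟨he, hef⟩) x hxe
        · rcases Sym2.mem_iff.mp hxe with rfl | rfl
          · simp [not_or, hu''.1.symm, huv]
          · simp [not_or, hadj2.ne, hu'v]
        · have hx := hNin e he x hxe
          simp only [Set.mem_compl_iff, Set.mem_insert_iff, Set.mem_singleton_iff, not_or] at hx ⊢
          refine ⟨fun h => hef ?_, hx.2⟩
          subst h
          exact hNu''e e he hxe
      · intro x hx
        simp only [Set.mem_compl_iff, Set.mem_insert_iff, Set.mem_singleton_iff, not_or] at hx
        by_cases hxu : x = u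
        · exact ⟨s(u, u'), Or.inl rfl, by simp [hxu]⟩
        by_cases hxu' : x = u'
        · exact ⟨s(u, u'), Or.inl rfl, by simp [hxu']⟩
        · obtain ⟨e, he, hxe⟩ := hNcov x (by simp [not_or, hxu, hx.2])
          refine ⟨e, Or.inr ⟨he, fun hef => ?_⟩, hxe⟩
          subst hef
          rcases Sym2.mem_iff.mp hxe with rfl | rfl
          · exact hxu' rfl
          · exact hx.1 rfl
    have hkey : N₂ \ M = (N \ M) \ {s(u', u'')} := by
      ext e
      simp only [hN₂def, Set.mem_diff, Set.mem_insert_iff, Set.mem_singleton_iff]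
      constructor
      · rintro ⟨rfl | ⟨h1, h2⟩, h3⟩
        · exact absurd hMu h3
        · exact ⟨⟨h1, h3⟩, h2⟩
      · rintro ⟨⟨h1, h2⟩, h3⟩
        exact ⟨Or.inr ⟨h1, h3⟩, h2⟩
    have hmemNM : s(u', u'') ∈ N \ M := ⟨hfN, hfM⟩
    have hlt : (N₂ \ M).ncard < n := by
      rw [hkey]
      have := Set.ncard_diff_singleton_add_one hmemNM (Set.toFinite _)
      omega
    obtain ⟨p', hp'sat, hp'edges⟩ :=
      IH _ hlt N₂ u'' v hu''.2 hMC2 le_rfl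
    obtain ⟨hp'path, hp'odd, hp'alt, hp'head⟩ := hp'sat
    have hedge_u : ∀ e ∈ p'.edges, u ∈ e → e = s(u, u') := by
      intro e he hx
      rcases hp'edges e he with hmem | hmem
      · exact hMuu' e hmem hx
      · rcases hmem with rfl | ⟨hmem, -⟩
        · rfl
        · exact absurd hx (hNu e hmem)
    have hedge_u' : ∀ e ∈ p'.edges, u' ∈ e → e = s(u, u') := by
      intro e he hx
      rcases hp'edges e he with hmem | hmem
      · exact hMu'e e hmem hx
      · rcases hmem with rfl | ⟨hmem, hef⟩
        · rfl
        · exact absurd (hNu'e e hmem hx) hef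
    have husup : u ∉ p'.support := by
      intro hsup
      obtain ⟨e, he, g, hg, hne, hxe, hxg⟩ :=
        two_incident_edges hp'path hsup hu''.1.symm huv
      exact hne ((hedge_u e he hxe).trans (hedge_u g hg hxg).symm)
    have hu'sup : u' ∉ p'.support := by
      intro hsup
      obtain ⟨e, he, g, hg, hne, hxe, hxg⟩ :=
        two_incident_edges hp'path hsup hadj2.ne hu'v
      exact hne ((hedge_u' e he hxe).trans (hedge_u' g hg hxg).symm)
    refine ⟨Walk.cons hadj (Walk.cons hadj2 p'), ⟨?_, ?_, ?_, ?_⟩, ?_⟩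
    · rw [Walk.cons_isPath_iff, Walk.cons_isPath_iff]
      refine ⟨⟨hp'path, hu'sup⟩, ?_⟩
      rw [Walk.support_cons]
      simp only [List.mem_cons, not_or]
      exact ⟨hune, husup⟩
    · simp only [Walk.length_cons]
      obtain ⟨k, hk⟩ := hp'odd
      exact ⟨k + 1, by omega⟩
    · simp only [IsAltWalk, Walk.edges_cons]
      rw [List.Chain', List.isChain_cons, List.isChain_cons]
      refine ⟨?_, ?_, hp'alt⟩
      · intro b hb
        simp only [List.head?, Option.mem_def, Option.some.injEq] at hb
        subst hb
        exact iff_of_true hMu hfM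
      · intro b hb
        have hbM : b ∈ M := hp'head b hb
        exact iff_of_false hfM (not_not_intro hbM)
    · intro e he
      simp only [Walk.edges_cons, List.head?, Option.some.injEq] at he
      subst he
      exact hMu
    · intro e he
      simp only [Walk.edges_cons, List.mem_cons] at he
      rcases he with rfl | rfl | he
      · exact Or.inl hMu
      · exact Or.inr hfN
      · rcases hp'edges e he with hm | hm
        · exact Or.inl hm
        · rcases hm with rfl | ⟨hm, -⟩
          · exact Or.inl hMu
          · exact Or.inr hm

lemma lemA [Finite V] (hM : IsPerfectMatchingSet G M) :
    ∀ (n : ℕ) (N : Set (Sym2 V)) (u : V), MatchCover G N ({u}ᶜ : Set V) →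
      (N \ M).ncard ≤ n → False := by
  intro n
  induction n using Nat.strong_induction_on with
  | _ n IH =>
  intro N u hN hcard
  obtain ⟨hNsub, hNuniq, hNin, hNcov⟩ := hN
  obtain ⟨u', hadj, hMu⟩ := pm_partner hM u
  have hune : u ≠ u' := hadj.ne
  have hNu : ∀ e ∈ N, u ∉ e := fun e he hx => by
    have := hNin e he u hx; simp at this
  obtain ⟨f, hfN, hu'f⟩ := hNcov u' (by simp [hune.symm])
  obtain ⟨u'', rfl⟩ := Sym2.mem_iff_exists.mp hu'f
  have hadj2 : G.Adj u' u'' := (G.mem_edgeSet).mp (hNsub hfN)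
  have hu''u : u'' ≠ u := by
    have := hNin _ hfN u'' (by simp); simpa using this
  have hfM : s(u', u'') ∉ M := by
    intro hmem
    have heq : s(u, u') = s(u', u'') := pm_unique (x := u') hM hMu hmem (by simp) (by simp)
    rw [Sym2.eq_iff] at heq
    rcases heq with ⟨h1, h2⟩ | ⟨h1, h2⟩
    · exact hune h1
    · exact hu''u h1.symm
  have hNu'e : ∀ e ∈ N, u' ∈ e → e = s(u', u'') := fun e he hx =>
    hNuniq u' e he _ hfN hx (by simp)
  have hNu''e : ∀ e ∈ N, u'' ∈ e → e = s(u', u'') := fun e he hx =>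
    hNuniq u'' e he _ hfN hx (by simp)
  set N₂ : Set (Sym2 V) := insert s(u, u') (N \ {s(u', u'')}) with hN₂def
  have hMC2 : MatchCover G N₂ ({u''}ᶜ : Set V) := by
    refine ⟨?_, ?_, ?_, ?_⟩
    · rintro e (rfl | ⟨he, -⟩)
      · exact (G.mem_edgeSet).mpr hadj
      · exact hNsub he
    · rintro x e (rfl | ⟨he, hef⟩) g (rfl | ⟨hg, hgf⟩) hxe hxg
      · rfl
      · exfalso
        rcases Sym2.mem_iff.mp hxe with rfl | rfl
        · exact hNu g hg hxg
        · exact hgf (hNu'e g hg hxg)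
      · exfalso
        rcases Sym2.mem_iff.mp hxg with rfl | rfl
        · exact hNu e he hxe
        · exact hef (hNu'e e he hxe)
      · exact hNuniq x e he g hg hxe hxg
    · rintro e (rfl | ⟨he, hef⟩) x hxe
      · rcases Sym2.mem_iff.mp hxe with rfl | rfl
        · simp [hu''u.symm]
        · simp [hadj2.ne]
      · simp only [Set.mem_compl_iff, Set.mem_singleton_iff]
        intro h
        subst h
        exact hef (hNu''e e he hxe)
    · intro x hx
      simp only [Set.mem_compl_iff, Set.mem_singleton_iff] at hx
      by_cases hxu : x = u
      · exact ⟨s(u, u'), Or.inl rfl, by simp [hxu]⟩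
      by_cases hxu' : x = u'
      · exact ⟨s(u, u'), Or.inl rfl, by simp [hxu']⟩
      · obtain ⟨e, he, hxe⟩ := hNcov x (by simp [hxu])
        refine ⟨e, Or.inr ⟨he, fun hef => ?_⟩, hxe⟩
        subst hef
        rcases Sym2.mem_iff.mp hxe with rfl | rfl
        · exact hxu' rfl
        · exact hx rfl
  have hkey : N₂ \ M = (N \ M) \ {s(u', u'')} := by
    ext e
    simp only [hN₂def, Set.mem_diff, Set.mem_insert_iff, Set.mem_singleton_iff]
    constructor
    · rintro ⟨rfl | ⟨h1, h2⟩, h3⟩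
      · exact absurd hMu h3
      · exact ⟨⟨h1, h3⟩, h2⟩
    · rintro ⟨⟨h1, h2⟩, h3⟩
      exact ⟨Or.inr ⟨h1, h3⟩, h2⟩
  have hmemNM : s(u', u'') ∈ N \ M := ⟨hfN, hfM⟩
  have hlt : (N₂ \ M).ncard < n := by
    rw [hkey]
    have := Set.ncard_diff_singleton_add_one hmemNM (Set.toFinite _)
    omega
  exact IH _ hlt N₂ u'' hMC2 le_rfl

lemma back (hM : IsPerfectMatchingSet G M) :
    ∀ (n : ℕ) (u v : V) (p : G.Walk u v), p.length ≤ n → IsSaturatedPath M p →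
      ∃ N, MatchCover G N ({u, v}ᶜ : Set V) ∧ ∀ e ∈ N, e ∈ M ∨ e ∈ p.edges := by
  intro n
  induction n using Nat.strong_induction_on with
  | _ n IH =>
  intro u v p hlen hsat
  obtain ⟨hpath, hodd, halt, hhead⟩ := hsat
  have hpnil : ¬ p.Nil := by
    rw [Walk.nil_iff_length_eq]
    obtain ⟨k, hk⟩ := hodd
    omega
  obtain ⟨a, h, q, rfl⟩ := Walk.not_nil_iff.mp hpnil
  have hMsua : s(u, a) ∈ M := hhead _ (by simp)
  have hau : a ≠ u := h.ne'
  by_cases hqnil : q.Nil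
  · have hav : a = v := Walk.eq_of_length_eq_zero (Walk.nil_iff_length_eq.mp hqnil)
    subst hav
    have hq : q = Walk.nil := Walk.isPath_iff_eq_nil.mp hpath.of_cons
    subst hq
    refine ⟨M \ {s(u, a)}, ⟨fun e he => hM.1 he.1, ?_, ?_, ?_⟩, fun e he => Or.inl he.1⟩
    · intro x e he f hf hxe hxf
      exact pm_unique hM he.1 hf.1 hxe hxf
    · rintro e ⟨he, hne⟩ x hxe
      simp only [Set.mem_compl_iff, Set.mem_insert_iff, Set.mem_singleton_iff, not_or]
      constructor
      · rintro rfl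
        exact hne (pm_unique hM he hMsua hxe (by simp))
      · rintro rfl
        exact hne (pm_unique hM he hMsua hxe (by simp))
    · intro x hx
      simp only [Set.mem_compl_iff, Set.mem_insert_iff, Set.mem_singleton_iff, not_or] at hx
      obtain ⟨e, ⟨he, hxe⟩, -⟩ := hM.2 x
      refine ⟨e, ⟨he, fun hef => ?_⟩, hxe⟩
      rw [Set.mem_singleton_iff] at hef
      subst hef
      rcases Sym2.mem_iff.mp hxe with rfl | rfl
      · exact hx.1 rfl
      · exact hx.2 rfl
  · obtain ⟨b, h', q', rfl⟩ := Walk.not_nil_iff.mp hqnil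
    have hconspath : (Walk.cons h' q').IsPath := hpath.of_cons
    have hq'path : q'.IsPath := hconspath.of_cons
    have hanotin : a ∉ q'.support := (Walk.cons_isPath_iff h' q').mp hconspath |>.2
    have hunotin' : u ∉ (Walk.cons h' q').support := (Walk.cons_isPath_iff h _).mp hpath |>.2
    have hunotin : u ∉ q'.support := by
      rw [Walk.support_cons] at hunotin'
      exact fun hm => hunotin' (List.mem_cons_of_mem _ hm)
    have hua : u ≠ a := fun hm => by
      rw [Walk.support_cons] at hunotin'
      exact hunotin' (hm ▸ List.mem_cons_self)
    have hc : List.Chain' (fun e f => e ∈ M ↔ f ∉ M) (s(u, a) :: s(a, b) :: q'.edges) := by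
      have := halt
      simpa [IsAltWalk] using this
    have hsabM : s(a, b) ∉ M := (List.isChain_cons_cons.mp hc).1.mp hMsua
    have hc2 : List.Chain' (fun e f => e ∈ M ↔ f ∉ M) (s(a, b) :: q'.edges) :=
      (List.isChain_cons_cons.mp hc).2
    have hq'alt : IsAltWalk M q' := hc2.tail
    have hq'head : ∀ e, q'.edges.head? = some e → e ∈ M := by
      intro e he
      have := (List.isChain_cons.mp hc2).1 e he
      by_contra hem
      exact hsabM (this.mpr hem)
    have hq'odd : Odd q'.length := by
      obtain ⟨k, hk⟩ := hodd
      simp only [Walk.length_cons] at hk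
      exact ⟨k - 1, by omega⟩
    have hbv : b ≠ v := by
      rintro rfl
      have : q' = Walk.nil := Walk.isPath_iff_eq_nil.mp hq'path
      subst this
      simp at hq'odd
    have hlen' : q'.length < n := by
      simp only [Walk.length_cons] at hlen
      omega
    obtain ⟨N', ⟨hN'sub, hN'uniq, hN'in, hN'cov⟩, hN'e⟩ :=
      IH q'.length hlen' b v q' le_rfl ⟨hq'path, hq'odd, hq'alt, hq'head⟩
    have hN'b : ∀ e ∈ N', b ∉ e := fun e he hx => by
      have := hN'in e he b hx; simp at this
    have hN'v : ∀ e ∈ N', v ∉ e := fun e he hx => by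
      have := hN'in e he v hx; simp at this
    have hub : u ≠ b := fun hm => hunotin (hm ▸ q'.start_mem_support)
    have huv : u ≠ v := fun hm => hunotin (hm ▸ q'.end_mem_support)
    have hav : a ≠ v := fun hm => hanotin (hm ▸ q'.end_mem_support)
    have hab : a ≠ b := h'.ne
    have hedge_u : ∀ e ∈ N', u ∈ e → e = s(u, a) := by
      intro e he hx
      rcases hN'e e he with hm | hm
      · exact pm_unique hM hm hMsua hx (by simp)
      · exact absurd (mem_support_of_mem_edges' hm hx) hunotin
    have hedge_a : ∀ e ∈ N', a ∈ e → e = s(u, a) := by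
      intro e he hx
      rcases hN'e e he with hm | hm
      · exact pm_unique hM hm hMsua hx (by simp)
      · exact absurd (mem_support_of_mem_edges' hm hx) hanotin
    have hsuaN' : s(u, a) ∈ N' := by
      obtain ⟨e, he, hue⟩ := hN'cov u (by simp [not_or, hub, huv])
      rw [← hedge_u e he hue]
      exact he
    refine ⟨insert s(a, b) (N' \ {s(u, a)}), ⟨?_, ?_, ?_, ?_⟩, ?_⟩
    · rintro e (rfl | ⟨he, -⟩)
      · exact (G.mem_edgeSet).mpr h'
      · exact hN'sub he
    · rintro x e (rfl | ⟨he, hef⟩) g (rfl | ⟨hg, hgf⟩) hxe hxg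
      · rfl
      · exfalso
        rcases Sym2.mem_iff.mp hxe with rfl | rfl
        · exact hgf (hedge_a g hg hxg)
        · exact hN'b g hg hxg
      · exfalso
        rcases Sym2.mem_iff.mp hxg with rfl | rfl
        · exact hef (hedge_a e he hxe)
        · exact hN'b e he hxe
      · exact hN'uniq x e he g hg hxe hxg
    · rintro e (rfl | ⟨he, hef⟩) x hxe
      · rcases Sym2.mem_iff.mp hxe with rfl | rfl
        · simp [not_or, hau, hav]
        · simp [not_or, hub.symm, hbv]
      · have hx := hN'in e he x hxe
        simp only [Set.mem_compl_iff, Set.mem_insert_iff, Set.mem_singleton_iff, not_or]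
          at hx ⊢
        refine ⟨fun hm => ?_, hx.2⟩
        subst hm
        exact hef (hedge_u e he hxe)
    · intro x hx
      simp only [Set.mem_compl_iff, Set.mem_insert_iff, Set.mem_singleton_iff, not_or] at hx
      by_cases hxa : x = a
      · exact ⟨s(a, b), Or.inl rfl, by simp [hxa]⟩
      by_cases hxb : x = b
      · exact ⟨s(a, b), Or.inl rfl, by simp [hxb]⟩
      · obtain ⟨e, he, hxe⟩ := hN'cov x (by simp [not_or, hxb, hx.2])
        refine ⟨e, Or.inr ⟨he, fun hef => ?_⟩, hxe⟩
        rw [Set.mem_singleton_iff] at hef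
        subst hef
        rcases Sym2.mem_iff.mp hxe with rfl | rfl
        · exact hx.1 rfl
        · exact hxa rfl
    · rintro e (rfl | ⟨he, -⟩)
      · exact Or.inr (by simp)
      · rcases hN'e e he with hm | hm
        · exact Or.inl hm
        · exact Or.inr (by simp [hm])

end AuxLemmas

theorem stmt8 [Finite V] (G : SimpleGraph V) (M : Set (Sym2 V))
    (hM : IsPerfectMatchingSet G M) (u v : V) :
    Factorizable (G.induce ({u, v}ᶜ : Set V)) ↔
      ∃ p : G.Walk u v, IsSaturatedPath M p := by
  by_cases huv : u = v
  · subst huv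
    constructor
    · intro h
      exfalso
      obtain ⟨N, hN⟩ := bridge_mp h
      rw [Set.pair_eq_singleton] at hN
      exact lemA hM (N \ M).ncard N u hN le_rfl
    · rintro ⟨p, hpath, hodd, -, -⟩
      exfalso
      have hnil := (Walk.isPath_iff_eq_nil (p := p)).mp hpath
      subst hnil
      simp at hodd
  · constructor
    · intro h
      obtain ⟨N, hN⟩ := bridge_mp h
      obtain ⟨p, hp, -⟩ := fwd hM (N \ M).ncard N u v huv hN le_rfl
      exact ⟨p, hp⟩
    · rintro ⟨p, hp⟩
      obtain ⟨N, hN, -⟩ := back hM p.length u v p le_rfl hp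
      exact bridge_mpr hN
end

section
/- Let M be a near-perfect matching of a graph G exposing the vertex v. Then G is factor-critical if and only if for every vertex u of G there exists an M-balanced path from u to v. -/
open SimpleGraph

variable {V : Type*}

-- helper: vertex of an edge of a walk is in support
lemma mem_support_of_mem_edges'_s11 {G : SimpleGraph V} {u v x : V} {p : G.Walk u v}
    {e : Sym2 V} (he : e ∈ p.edges) (hx : x ∈ e) : x ∈ p.support := by
  induction e with
  | _ a b =>
    rcases Sym2.mem_iff.1 hx with rfl | rfl
    · exact p.fst_mem_support_of_mem_edges he
    · exact p.snd_mem_support_of_mem_edges he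

-- Lemma A: switching M along a balanced path from u to v yields a matching exposing exactly u.
lemma lemA_s11 {G : SimpleGraph V} {M : Set (Sym2 V)} {v : V}
    (hm : IsMatchingSet G M) (hnp : ∀ x : V, (∃ e ∈ M, x ∈ e) ↔ x ≠ v) :
    ∀ (n : ℕ) (u : V) (p : G.Walk u v), p.length = n → IsBalancedPath M p →
      ∃ M', IsMatchingSet G M' ∧ (∀ x, (∃ e ∈ M', x ∈ e) ↔ x ≠ u) ∧
        ∀ e ∈ M', e ∈ M ∨ e ∈ p.edges := by
  intro n
  induction n using Nat.strong_induction_on with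
  | _ n ih =>
    intro u p hlen hbal
    obtain ⟨hpath, heven, halt, hhead⟩ := hbal
    cases p with
    | nil => exact ⟨M, hm, hnp, fun e he => Or.inl he⟩
    | @cons _ a _ h q =>
      cases q with
      | nil => simp at heven
      | @cons _ b _ h' r =>
        -- p = u -e0- a -e1- b - r
        set e0 : Sym2 V := s(u, a) with he0
        set e1 : Sym2 V := s(a, b) with he1
        have hedges : (SimpleGraph.Walk.cons h (SimpleGraph.Walk.cons h' r)).edges
            = e0 :: e1 :: r.edges := by simp [SimpleGraph.Walk.edges_cons, he0, he1]
        have hsupp : (SimpleGraph.Walk.cons h (SimpleGraph.Walk.cons h' r)).support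
            = u :: a :: r.support := by simp [SimpleGraph.Walk.support_cons]
        have hnd := (SimpleGraph.Walk.isPath_def _).1 hpath
        rw [hsupp] at hnd
        have hua : u ≠ a := by simp at hnd; tauto
        have hur : u ∉ r.support := by simp at hnd; tauto
        have har : a ∉ r.support := by simp at hnd; tauto
        have hrnd : r.support.Nodup := by simp at hnd; tauto
        have hrpath : r.IsPath := (SimpleGraph.Walk.isPath_def _).2 hrnd
        have he0M : e0 ∈ M := hhead e0 (by rw [hedges]; rfl)
        have hR01 : (e0 ∈ M ↔ e1 ∉ M) ∧ List.Chain' (fun e f => e ∈ M ↔ f ∉ M) (e1 :: r.edges) := by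
          have := halt
          unfold IsAltWalk at this
          rw [hedges] at this
          exact List.isChain_cons_cons.1 this
        have he1M : e1 ∉ M := hR01.1.1 he0M
        have hrlen : r.length = n - 2 := by
          simp [SimpleGraph.Walk.length_cons] at hlen; omega
        have hn2 : n - 2 < n := by
          simp [SimpleGraph.Walk.length_cons] at hlen; omega
        have hreven : Even r.length := by
          rcases heven with ⟨k, hk⟩
          simp [SimpleGraph.Walk.length_cons] at hk
          exact ⟨k - 1, by omega⟩
        have hralt : IsAltWalk M r := by
          have := hR01.2
          exact (List.isChain_cons.1 this).2
        have hrhead : ∀ e, r.edges.head? = some e → e ∈ M := by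
          intro e hee
          have := (List.isChain_cons.1 hR01.2).1 e hee
          tauto
        obtain ⟨M'', hm'', hcov'', hC''⟩ := ih (n - 2) hn2 b r hrlen ⟨hrpath, hreven, hralt, hrhead⟩
        -- facts
        have hab : a ≠ b := G.ne_of_adj h'
        have hbr : b ∈ r.support := r.start_mem_support
        have hub : u ≠ b := fun hh => hur (hh ▸ hbr)
        have hbexp : ∀ e ∈ M'', b ∉ e := by
          intro e he hbe
          exact (hcov'' b).1 ⟨e, he, hbe⟩ rfl
        -- e0 ∈ M''
        have hae0 : a ∈ e0 := by rw [he0]; simp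
        have hue0 : u ∈ e0 := by rw [he0]; simp
        have he0M'' : e0 ∈ M'' := by
          obtain ⟨f, hf, haf⟩ := (hcov'' a).2 hab
          rcases hC'' f hf with hfM | hfr
          · rwa [hm.2 a f hfM e0 he0M haf hae0] at hf
          · exact absurd (mem_support_of_mem_edges'_s11 hfr haf) har
        refine ⟨insert e1 (M'' \ {e0}), ⟨?_, ?_⟩, ?_, ?_⟩
        · -- subset edgeSet
          intro e he
          rcases he with rfl | ⟨he, _⟩
          · exact (SimpleGraph.mem_edgeSet _).2 h'
          · exact hm''.1 he
        · -- matching property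
          intro x e he f hf hxe hxf
          have key : ∀ g ∈ M'' \ ({e0} : Set (Sym2 V)), x ∈ e1 → x ∈ g → False := by
            intro g hg hx1 hxg
            rcases Sym2.mem_iff.1 hx1 with rfl | rfl
            · exact hg.2 (hm''.2 x g hg.1 e0 he0M'' hxg hae0)
            · exact hbexp g hg.1 hxg
          rcases he with rfl | he <;> rcases hf with rfl | hf
          · rfl
          · exact (key f hf hxe hxf).elim
          · exact (key e he hxf hxe).elim
          · exact hm''.2 x e he.1 f hf.1 hxe hxf
        · -- coverage: x covered iff x ≠ u
          intro x
          constructor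
          · rintro ⟨e, he, hxe⟩ hxu
            rw [hxu] at hxe
            rcases he with rfl | ⟨he, hne0⟩
            · rcases Sym2.mem_iff.1 hxe with rfl | rfl
              · exact hua rfl
              · exact hub rfl
            · rcases hC'' e he with heM | her
              · exact hne0 (hm.2 u e heM e0 he0M hxe hue0)
              · exact hur (mem_support_of_mem_edges'_s11 her hxe)
          · intro hxu
            by_cases hxa : x = a
            · exact ⟨e1, Or.inl rfl, by rw [hxa, he1]; simp⟩
            by_cases hxb : x = b
            · exact ⟨e1, Or.inl rfl, by rw [hxb, he1]; simp⟩
            · obtain ⟨f, hf, hxf⟩ := (hcov'' x).2 hxb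
              refine ⟨f, Or.inr ⟨hf, ?_⟩, hxf⟩
              rintro rfl
              rcases Sym2.mem_iff.1 hxf with rfl | rfl
              · exact hxu rfl
              · exact hxa rfl
        · -- clause C
          intro e he
          rcases he with rfl | ⟨he, _⟩
          · exact Or.inr (by rw [hedges]; simp)
          · rcases hC'' e he with heM | her
            · exact Or.inl heM
            · exact Or.inr (by rw [hedges]; right; right; exact her)

-- Lemma B: from a matching exposing exactly u, build an M-balanced path u → v.
lemma lemB [Finite V] {G : SimpleGraph V} {M : Set (Sym2 V)} {v : V}
    (hm : IsMatchingSet G M) (hnp : ∀ x : V, (∃ e ∈ M, x ∈ e) ↔ x ≠ v) :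
    ∀ (n : ℕ) (u : V) (M' : Set (Sym2 V)), IsMatchingSet G M' →
      (∀ x : V, (∃ e ∈ M', x ∈ e) ↔ x ≠ u) → (M' \ M).ncard = n →
      ∃ p : G.Walk u v, IsBalancedPath M p ∧
        (∀ x ∈ p.support, x ≠ u → ∃ e ∈ p.edges, x ∈ e ∧ e ∈ M' ∧ e ∉ M) := by
  intro n
  induction n using Nat.strong_induction_on with
  | _ n ih =>
    intro u M' hm' hcov' hn
    by_cases huv : u = v
    · subst huv
      refine ⟨SimpleGraph.Walk.nil, ⟨SimpleGraph.Walk.IsPath.nil, by simp, ?_, ?_⟩, ?_⟩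
      · unfold IsAltWalk; exact List.isChain_nil
      · intro e he; simp [SimpleGraph.Walk.edges_nil] at he
      · intro x hx hxu
        simp [SimpleGraph.Walk.support_nil] at hx
        exact absurd hx hxu
    · -- u ≠ v, so u is M-covered: partner a
      obtain ⟨e0', he0M, hue0⟩ := (hnp u).2 huv
      obtain ⟨a, rfl⟩ := Sym2.mem_iff_exists.1 hue0
      have hadj0 : G.Adj u a := (SimpleGraph.mem_edgeSet _).1 (hm.1 he0M)
      have hua : u ≠ a := G.ne_of_adj hadj0
      have huexp' : ∀ e ∈ M', u ∉ e := fun e he hue => (hcov' u).1 ⟨e, he, hue⟩ rfl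
      have hvexp : ∀ e ∈ M, v ∉ e := fun e he hve => (hnp v).1 ⟨e, he, hve⟩ rfl
      have hav : a ≠ v := fun hh => hvexp _ he0M (hh ▸ Sym2.mem_mk_right u a)
      -- a's M'-partner b
      obtain ⟨e1', he1M', hae1⟩ := (hcov' a).2 (Ne.symm hua)
      obtain ⟨b, rfl⟩ := Sym2.mem_iff_exists.1 hae1
      have hadj1 : G.Adj a b := (SimpleGraph.mem_edgeSet _).1 (hm'.1 he1M')
      have hab : a ≠ b := G.ne_of_adj hadj1
      have hub : u ≠ b := fun hh => huexp' _ he1M' (hh ▸ Sym2.mem_mk_right a b)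
      have he1nM : s(a, b) ∉ M := by
        intro hmem
        have : s(u, a) = s(a, b) :=
          hm.2 a _ he0M _ hmem (Sym2.mem_mk_right u a) (Sym2.mem_mk_left a b)
        exact huexp' _ he1M' (this ▸ Sym2.mem_mk_left u a)
      -- the new matching M₂ exposing b
      set M₂ : Set (Sym2 V) := insert s(u, a) (M' \ {s(a, b)}) with hM₂
      have hm₂ : IsMatchingSet G M₂ := by
        constructor
        · intro e he
          rcases he with rfl | ⟨he, _⟩
          · exact hm.1 he0M
          · exact hm'.1 he
        · intro x e he f hf hxe hxf
          have key : ∀ g ∈ M' \ ({s(a, b)} : Set (Sym2 V)), x ∈ s(u, a) → x ∈ g → False := by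
            intro g hg hx0 hxg
            rcases Sym2.mem_iff.1 hx0 with h1 | h1
            · exact huexp' g hg.1 (h1 ▸ hxg)
            · exact hg.2 (hm'.2 a g hg.1 _ he1M' (h1 ▸ hxg) (Sym2.mem_mk_left a b))
          rcases he with rfl | he <;> rcases hf with rfl | hf
          · rfl
          · exact (key f hf hxe hxf).elim
          · exact (key e he hxf hxe).elim
          · exact hm'.2 x e he.1 f hf.1 hxe hxf
      have hcov₂ : ∀ x : V, (∃ e ∈ M₂, x ∈ e) ↔ x ≠ b := by
        intro x
        constructor
        · rintro ⟨e, he, hxe⟩ hxb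
          rw [hxb] at hxe
          rcases he with rfl | ⟨he, hne⟩
          · rcases Sym2.mem_iff.1 hxe with rfl | rfl
            · exact hub rfl
            · exact hab rfl
          · exact hne (hm'.2 b e he _ he1M' hxe (Sym2.mem_mk_right a b))
        · intro hxb
          by_cases hxu : x = u
          · exact ⟨s(u, a), Or.inl rfl, hxu ▸ Sym2.mem_mk_left u a⟩
          by_cases hxa : x = a
          · exact ⟨s(u, a), Or.inl rfl, hxa ▸ Sym2.mem_mk_right u a⟩
          · obtain ⟨f, hf, hxf⟩ := (hcov' x).2 hxu
            refine ⟨f, Or.inr ⟨hf, ?_⟩, hxf⟩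
            rintro rfl
            rcases Sym2.mem_iff.1 hxf with rfl | rfl
            · exact hxa rfl
            · exact hxb rfl
      -- measure decreases
      have he1diff : s(a, b) ∈ M' \ M := ⟨he1M', he1nM⟩
      have hmeas : M₂ \ M = (M' \ M) \ {s(a, b)} := by
        ext e
        constructor
        · rintro ⟨he, heM⟩
          rcases he with rfl | ⟨he, hne⟩
          · exact absurd he0M heM
          · exact ⟨⟨he, heM⟩, hne⟩
        · rintro ⟨⟨he, heM⟩, hne⟩
          exact ⟨Or.inr ⟨he, hne⟩, heM⟩
      have hlt : (M₂ \ M).ncard < n := by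
        rw [hmeas, ← hn]
        exact Set.ncard_diff_singleton_lt_of_mem he1diff (Set.toFinite _)
      obtain ⟨q, ⟨hqpath, hqeven, hqalt, hqhead⟩, hqinv⟩ :=
        ih _ hlt b M₂ hm₂ hcov₂ rfl
      -- u, a not in q.support
      have huq : u ∉ q.support := by
        intro hq
        obtain ⟨e, heq, hue, heM₂, henM⟩ := hqinv u hq hub
        rcases heM₂ with rfl | ⟨he, _⟩
        · exact henM he0M
        · exact huexp' _ he hue
      have haq : a ∉ q.support := by
        intro hq
        obtain ⟨e, heq, hae, heM₂, henM⟩ := hqinv a hq hab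
        rcases heM₂ with rfl | ⟨he, hne⟩
        · exact henM he0M
        · exact hne (hm'.2 a e he _ he1M' hae (Sym2.mem_mk_left a b))
      -- assemble the path p = u - a - b - q
      refine ⟨SimpleGraph.Walk.cons hadj0 (SimpleGraph.Walk.cons hadj1 q), ⟨?_, ?_, ?_, ?_⟩, ?_⟩
      · -- IsPath
        refine SimpleGraph.Walk.IsPath.cons (SimpleGraph.Walk.IsPath.cons hqpath haq) ?_
        rw [SimpleGraph.Walk.support_cons]
        intro hmem
        rcases List.mem_cons.1 hmem with rfl | hmem
        · exact hua rfl
        · exact huq hmem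
      · -- even length
        simp only [SimpleGraph.Walk.length_cons]
        rcases hqeven with ⟨k, hk⟩
        exact ⟨k + 1, by omega⟩
      · -- alternating
        unfold IsAltWalk
        simp only [SimpleGraph.Walk.edges_cons]
        refine List.isChain_cons_cons.2 ⟨by tauto, ?_⟩
        cases hqe : q.edges with
        | nil => simp
        | cons e2 es =>
          have he2M : e2 ∈ M := hqhead e2 (by rw [hqe]; rfl)
          refine List.isChain_cons_cons.2 ⟨by tauto, ?_⟩
          have := hqalt
          unfold IsAltWalk at this
          rwa [hqe] at this
      · -- head in M
        intro e he
        simp only [SimpleGraph.Walk.edges_cons, List.head?_cons] at he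
        rw [← Option.some_inj.1 he]
        exact he0M
      · -- invariant
        intro x hx hxu
        rw [SimpleGraph.Walk.support_cons, SimpleGraph.Walk.support_cons] at hx
        have hedgesp : (SimpleGraph.Walk.cons hadj0 (SimpleGraph.Walk.cons hadj1 q)).edges
            = s(u, a) :: s(a, b) :: q.edges := rfl
        rcases List.mem_cons.1 hx with h1 | hx
        · exact absurd h1 hxu
        rcases List.mem_cons.1 hx with h1 | hx
        · exact ⟨s(a, b), by rw [hedgesp]; simp, h1 ▸ Sym2.mem_mk_left a b, he1M', he1nM⟩
        by_cases hxb : x = b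
        · exact ⟨s(a, b), by rw [hedgesp]; simp, hxb ▸ Sym2.mem_mk_right a b, he1M', he1nM⟩
        · obtain ⟨e, heq, hxe, heM₂, henM⟩ := hqinv x hx hxb
          refine ⟨e, by rw [hedgesp]; right; right; exact heq, hxe, ?_, henM⟩
          rcases heM₂ with rfl | ⟨he, _⟩
          · exact absurd he0M henM
          · exact he

-- glue 1: perfect matching of induce {w}ᶜ gives matching of G exposing exactly w
lemma sub_to_full {G : SimpleGraph V} {w : V} {N : Set (Sym2 ({w}ᶜ : Set V))}
    (hN : IsPerfectMatchingSet (G.induce ({w}ᶜ : Set V)) N) :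
    ∃ M' : Set (Sym2 V), IsMatchingSet G M' ∧ ∀ x : V, (∃ e ∈ M', x ∈ e) ↔ x ≠ w := by
  refine ⟨Sym2.map Subtype.val '' N, ⟨?_, ?_⟩, ?_⟩
  · rintro e ⟨e', he', rfl⟩
    induction e' with
    | _ a b =>
      have : (G.induce ({w}ᶜ : Set V)).Adj a b := hN.1 he'
      simpa [SimpleGraph.mem_edgeSet] using this
  · rintro x e ⟨e', he', rfl⟩ f ⟨f', hf', rfl⟩ hxe hxf
    obtain ⟨a, hae, hav⟩ := Sym2.mem_map.1 hxe
    obtain ⟨c, hcf, hcv⟩ := Sym2.mem_map.1 hxf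
    have hac : a = c := Subtype.val_injective (hav.trans hcv.symm)
    have := ((hN.2 a).unique ⟨he', hae⟩ ⟨hf', hac ▸ hcf⟩)
    rw [this]
  · intro x
    constructor
    · rintro ⟨e, ⟨e', he', rfl⟩, hxe⟩ hxw
      obtain ⟨a, hae, hav⟩ := Sym2.mem_map.1 hxe
      exact (Set.mem_compl_singleton_iff.1 a.2) (hav.trans hxw)
    · intro hxw
      have hx : x ∈ ({w}ᶜ : Set V) := Set.mem_compl_singleton_iff.2 hxw
      obtain ⟨e', ⟨he', hxe'⟩, _⟩ := hN.2 ⟨x, hx⟩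
      exact ⟨Sym2.map Subtype.val e', ⟨e', he', rfl⟩, Sym2.mem_map.2 ⟨⟨x, hx⟩, hxe', rfl⟩⟩

-- glue 2: matching of G exposing exactly w gives perfect matching of induce {w}ᶜ
lemma full_to_sub {G : SimpleGraph V} {w : V} {M' : Set (Sym2 V)}
    (hm' : IsMatchingSet G M') (hcov : ∀ x : V, (∃ e ∈ M', x ∈ e) ↔ x ≠ w) :
    Factorizable (G.induce ({w}ᶜ : Set V)) := by
  have hwexp : ∀ e ∈ M', w ∉ e := fun e he hwe => (hcov w).1 ⟨e, he, hwe⟩ rfl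
  refine ⟨{e : Sym2 ({w}ᶜ : Set V) | Sym2.map Subtype.val e ∈ M'}, ?_, ?_⟩
  · intro e he
    induction e with
    | _ a b =>
      have hGadj : G.Adj ↑a ↑b := (SimpleGraph.mem_edgeSet _).1 (hm'.1 he)
      simpa [SimpleGraph.mem_edgeSet] using hGadj
  · intro x
    have hxw : (x : V) ≠ w := Set.mem_compl_singleton_iff.1 x.2
    obtain ⟨e, he, hxe⟩ := (hcov x).2 hxw
    obtain ⟨y, rfl⟩ := Sym2.mem_iff_exists.1 hxe
    have hyw : y ≠ w := fun hh => hwexp _ he (hh ▸ Sym2.mem_mk_right (x : V) y)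
    have hy : y ∈ ({w}ᶜ : Set V) := Set.mem_compl_singleton_iff.2 hyw
    refine ⟨s(x, ⟨y, hy⟩), ⟨?_, Sym2.mem_mk_left x ⟨y, hy⟩⟩, ?_⟩
    · simpa using he
    · rintro f ⟨hf, hxf⟩
      have h1 : (x : V) ∈ Sym2.map Subtype.val f := Sym2.mem_map.2 ⟨x, hxf, rfl⟩
      have h2 : Sym2.map Subtype.val f = s((x : V), y) :=
        hm'.2 x _ hf _ he h1 hxe
      apply Sym2.map.injective Subtype.val_injective
      rw [h2]; simp


theorem stmt11 [Finite V] (G : SimpleGraph V) (M : Set (Sym2 V)) (v : V)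
    (hm : IsMatchingSet G M) (hnp : ∀ u : V, (∃ e ∈ M, u ∈ e) ↔ u ≠ v) :
    (∀ w : V, Factorizable (G.induce ({w}ᶜ : Set V))) ↔
      ∀ u : V, ∃ p : G.Walk u v, IsBalancedPath M p := by
  constructor
  · intro hfc u
    obtain ⟨N, hN⟩ := hfc u
    obtain ⟨M', hm', hcov'⟩ := sub_to_full hN
    obtain ⟨p, hp, _⟩ := lemB hm hnp (M' \ M).ncard u M' hm' hcov' rfl
    exact ⟨p, hp⟩
  · intro hpaths w
    obtain ⟨p, hp⟩ := hpaths w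
    obtain ⟨M', hm', hcov', _⟩ := lemA_s11 hm hnp p.length w p rfl hp
    exact full_to_sub hm' hcov'
end

section
/- Every saturated factorizable graph is connected. -/
open SimpleGraph

variable {V : Type*}

lemma even_ncard_of_involution [Finite V] (C : Set V) (f : V → V)
    (hmap : ∀ v ∈ C, f v ∈ C) (hinv : ∀ v ∈ C, f (f v) = v)
    (hne : ∀ v ∈ C, f v ≠ v) : Even C.ncard := by
  generalize hn : C.ncard = n
  induction n using Nat.strong_induction_on generalizing C with
  | _ n ih =>
  rcases C.eq_empty_or_nonempty with rfl | ⟨v, hv⟩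
  · rw [Set.ncard_empty] at hn; simp [← hn]
  · have hfv := hmap v hv
    have hvne : v ≠ f v := (hne v hv).symm
    have hsub : ({v, f v} : Set V) ⊆ C := by
      intro w hw; rcases hw with rfl | rfl <;> [exact hv; exact hfv]
    have hpair : ({v, f v} : Set V).ncard = 2 := Set.ncard_pair hvne
    have hge : 2 ≤ n := by
      rw [← hn, ← hpair]; exact Set.ncard_le_ncard hsub (Set.toFinite C)
    set C' := C \ {v, f v} with hC'
    have hcard : C'.ncard = n - 2 := by
      rw [hC', Set.ncard_diff hsub, hpair, hn]
    have hmap' : ∀ w ∈ C', f w ∈ C' := by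
      rintro w ⟨hwC, hwn⟩
      refine ⟨hmap w hwC, ?_⟩
      rintro (h | h)
      · apply hwn; right
        have : f (f w) = f v := by rw [h]
        rw [hinv w hwC] at this; simp [this]
      · apply hwn; left
        have : f (f w) = f (f v) := by rw [h]
        rw [hinv w hwC, hinv v hv] at this; simp [this]
    have hev : Even ((n - 2)) := by
      refine ih (n - 2) (by omega) C' hmap' ?_ ?_ hcard
      · exact fun w hw => hinv w hw.1
      · exact fun w hw => hne w hw.1
    obtain ⟨k, hk⟩ := hev
    exact ⟨k + 1, by omega⟩

open Classical in
noncomputable def matchFn (W : Set (Sym2 V)) (v : V) : V :=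
  if h : ∃ e, e ∈ W ∧ v ∈ e then Sym2.Mem.other h.choose_spec.2 else v

lemma matchFn_spec {W : Set (Sym2 V)} (hW : ∀ v : V, ∃! e, e ∈ W ∧ v ∈ e) (v : V) :
    s(v, matchFn W v) ∈ W := by
  obtain ⟨e, he, _⟩ := hW v
  have h : ∃ e, e ∈ W ∧ v ∈ e := ⟨e, he⟩
  rw [matchFn, dif_pos h, Sym2.other_spec]
  exact h.choose_spec.1

lemma matchFn_unique {W : Set (Sym2 V)} (hW : ∀ v : V, ∃! e, e ∈ W ∧ v ∈ e)
    {v : V} {e : Sym2 V} (he : e ∈ W) (hv : v ∈ e) : e = s(v, matchFn W v) := by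
  obtain ⟨e', _, hu⟩ := hW v
  rw [hu e ⟨he, hv⟩, hu _ ⟨matchFn_spec hW v, by simp⟩]

lemma matchFn_invol {W : Set (Sym2 V)} (hW : ∀ v : V, ∃! e, e ∈ W ∧ v ∈ e) (v : V) :
    matchFn W (matchFn W v) = v := by
  set w := matchFn W v with hw
  have h1 : s(v, w) ∈ W := matchFn_spec hW v
  have h2 := matchFn_unique hW h1 (by simp : w ∈ s(v, w))
  rw [Sym2.eq_iff] at h2
  rcases h2 with ⟨h, h'⟩ | ⟨h, h'⟩
  · rw [← h']; exact h.symm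
  · exact h.symm

theorem stmt12 [Finite V] [Nonempty V] (G : SimpleGraph V) (hG : Saturated G) :
    G.Connected := by
  rw [connected_iff]
  refine ⟨fun x y => ?_, ‹_›⟩
  by_contra hxy
  have hne : x ≠ y := by rintro rfl; exact hxy (Reachable.refl x)
  have hnadj : ¬ G.Adj x y := fun h => hxy h.reachable
  obtain ⟨⟨M, hM⟩, hsat⟩ := hG
  have hlt := hsat x y hne hnadj
  set G' := G ⊔ SimpleGraph.fromEdgeSet {s(x, y)} with hG'
  have hexN : ∃ N, IsPerfectMatchingSet G' N ∧ ¬ IsPerfectMatchingSet G N := by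
    by_contra h
    push_neg at h
    have hsub : {N | IsPerfectMatchingSet G' N} ⊆ {N | IsPerfectMatchingSet G N} :=
      fun N hN => h N hN
    exact absurd (Set.ncard_le_ncard hsub (Set.toFinite _)) (by omega)
  obtain ⟨N, hN, hNG⟩ := hexN
  have hNedge : ∀ e ∈ N, e ≠ s(x, y) → e ∈ G.edgeSet := by
    intro e heN hexy
    have := hN.1 heN
    rw [hG', edgeSet_sup, edgeSet_fromEdgeSet] at this
    rcases this with h | ⟨h, _⟩
    · exact h
    · exact absurd h hexy
  have hxyN : s(x, y) ∈ N := by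
    by_contra h
    exact hNG ⟨fun e he => hNedge e he (fun h' => h (h' ▸ he)), hN.2⟩
  -- the component of x
  set C : Set V := {v | G.Reachable x v} with hC
  have hxC : x ∈ C := Reachable.refl x
  -- parity from M
  have hMcov := hM.2
  have hEvenC : Even C.ncard := by
    refine even_ncard_of_involution C (matchFn M) ?_ (fun v _ => matchFn_invol hMcov v) ?_
    · intro v hv
      have hadj : G.Adj v (matchFn M v) := hM.1 (matchFn_spec hMcov v)
      exact hv.trans hadj.reachable
    · intro v _
      have hadj : G.Adj v (matchFn M v) := hM.1 (matchFn_spec hMcov v)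
      exact fun h => hadj.ne h.symm
  -- parity from N on C \ {x}
  have hNcov := hN.2
  have hkey : ∀ v ∈ C \ ({x} : Set V), G.Adj v (matchFn N v) ∧ matchFn N v ≠ x := by
    rintro v ⟨hvC, hvx⟩
    have hvx' : v ≠ x := hvx
    have hsp := matchFn_spec hNcov v
    have hne' : s(v, matchFn N v) ≠ s(x, y) := by
      intro h
      have : v = x ∨ v = y := by
        have : v ∈ s(x, y) := h ▸ (by simp : v ∈ s(v, matchFn N v))
        simpa using this
      rcases this with rfl | rfl
      · exact hvx' rfl
      · exact hxy hvC
    have hadj : G.Adj v (matchFn N v) := hNedge _ hsp hne'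
    refine ⟨hadj, ?_⟩
    intro h
    have hxin : x ∈ s(v, matchFn N v) := by rw [h]; simp
    have := matchFn_unique hNcov hsp hxin
    have h2 := matchFn_unique hNcov hxyN (by simp : x ∈ s(x, y))
    rw [← this] at h2
    exact hne' h2.symm
  have hEvenC' : Even (C \ ({x} : Set V)).ncard := by
    refine even_ncard_of_involution _ (matchFn N) ?_ (fun v _ => matchFn_invol hNcov v) ?_
    · rintro v hv
      obtain ⟨hadj, hnx⟩ := hkey v hv
      exact ⟨hv.1.trans hadj.reachable, hnx⟩
    · intro v hv
      exact fun h => (hkey v hv).1.ne h.symm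
  rw [Set.ncard_diff_singleton_of_mem hxC] at hEvenC'
  have hpos : 0 < C.ncard := by
    rw [Set.ncard_pos (Set.toFinite C)]; exact ⟨x, hxC⟩
  obtain ⟨a, ha⟩ := hEvenC
  obtain ⟨b, hb⟩ := hEvenC'
  omega
end

section
/- Let G be a saturated factorizable graph, H a factor-connected component of G, and u, v ∈ V(H) with u ≠ v such that G − u − v is not factorizable. Then uv ∈ E(G). -/
open SimpleGraph

variable {V : Type*}

lemma aux13 {V : Type*} (G : SimpleGraph V) (u v : V)
    (N : Set (Sym2 V)) (hN : IsPerfectMatchingSet (G ⊔ SimpleGraph.fromEdgeSet {s(u, v)}) N)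
    (huv : s(u, v) ∈ N) : Factorizable (G.induce ({u, v}ᶜ : Set V)) := by
  obtain ⟨hsub, huniq⟩ := hN
  -- key: any edge of N containing a vertex in {u,v} is s(u,v)
  have hkey : ∀ f ∈ N, ∀ x : V, x ∈ f → (x = u ∨ x = v) → f = s(u, v) := by
    intro f hf x hxf hx
    obtain ⟨e, -, hu⟩ := huniq x
    have h1 := hu f ⟨hf, hxf⟩
    have h2 := hu s(u, v) ⟨huv, by rcases hx with h | h <;> simp [h]⟩
    rw [h1, h2]
  refine ⟨{e | Sym2.map Subtype.val e ∈ N}, ?_, ?_⟩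
  · intro e he
    induction e with
    | _ a b =>
      simp only [Set.mem_setOf_eq, Sym2.map_pair_eq] at he
      have hadj := hsub he
      rw [SimpleGraph.mem_edgeSet, SimpleGraph.sup_adj] at hadj
      rcases hadj with hadj | hadj
      · exact hadj
      · exfalso
        rw [SimpleGraph.fromEdgeSet_adj] at hadj
        have : (s(a.val, b.val) : Sym2 V) = s(u, v) := hadj.1
        rw [Sym2.eq_iff] at this
        have ha := a.2
        rcases this with ⟨h1, -⟩ | ⟨h1, -⟩ <;> simp [h1] at ha
  · intro w
    obtain ⟨f, ⟨hfN, hwf⟩, hu⟩ := huniq w.val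
    have hwuv : ¬(w.val = u ∨ w.val = v) := fun hh =>
      w.2 (by rcases hh with h | h <;> simp [h])
    have hfne : f ≠ s(u, v) := by
      intro hh
      apply hwuv
      rw [hh] at hwf
      simpa using hwf
    obtain ⟨x, hfx⟩ : ∃ x, f = s(w.val, x) := by
      induction f with
      | _ a b =>
        rcases Sym2.mem_iff.mp hwf with h | h
        · exact ⟨b, by rw [h]⟩
        · exact ⟨a, by rw [h, Sym2.eq_swap]⟩
    have hxuv : ¬(x = u ∨ x = v) := by
      intro hh
      exact hfne (hkey f hfN x (by rw [hfx]; simp) hh)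
    have hxmem : x ∈ ({u, v}ᶜ : Set V) := by simpa using hxuv
    refine ⟨s(w, ⟨x, hxmem⟩), ⟨by simpa [Sym2.map_pair_eq, ← hfx] using hfN, by simp⟩, ?_⟩
    rintro e ⟨heN, hwe⟩
    have h1 : Sym2.map Subtype.val e = f := hu _ ⟨heN, Sym2.mem_map.mpr ⟨w, hwe, rfl⟩⟩
    apply Sym2.map.injective (Subtype.val_injective)
    rw [h1, hfx]
    simp [Sym2.map_pair_eq]

theorem stmt13 [Finite V] (G : SimpleGraph V) (hG : Saturated G) (u v : V)
    (hfc : SameFC G u v) (hne : u ≠ v)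
    (h : ¬ Factorizable (G.induce ({u, v}ᶜ : Set V))) :
    G.Adj u v := by
  by_contra hnadj
  have hlt := hG.2 u v hne hnadj
  have hset : {N | IsPerfectMatchingSet G N} =
      {N | IsPerfectMatchingSet (G ⊔ SimpleGraph.fromEdgeSet {s(u, v)}) N} := by
    ext N
    simp only [Set.mem_setOf_eq]
    constructor
    · rintro ⟨hsub, huniq⟩
      exact ⟨fun e he => by rw [SimpleGraph.edgeSet_sup]; exact Or.inl (hsub he), huniq⟩
    · rintro ⟨hsub, huniq⟩
      refine ⟨?_, huniq⟩
      intro e he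
      have hmem := hsub he
      rw [SimpleGraph.edgeSet_sup] at hmem
      rcases hmem with h1 | h2
      · exact h1
      · exfalso
        rw [SimpleGraph.edgeSet_fromEdgeSet] at h2
        have heq : e = s(u, v) := h2.1
        exact h (aux13 G u v N ⟨hsub, huniq⟩ (heq ▸ he))
  rw [hset] at hlt
  exact lt_irrefl _ hlt
end

section
/- Let G be a factorizable graph with perfect matching M, let X ⊆ V(G) be a separating set, and let P be an M-saturated path in G. Then every connected component of P[X] (the subgraph of P induced on X) is itself an M-saturated path. -/
open SimpleGraph

variable {V : Type*}

/-- `z` is reachable from `w` inside the subgraph `H`. -/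
def ReachIn {G : SimpleGraph V} (H : G.Subgraph) (w z : V) : Prop :=
  ∃ (hw : w ∈ H.verts) (hz : z ∈ H.verts), H.coe.Reachable ⟨w, hw⟩ ⟨z, hz⟩

/-- The connected component of `w` in the subgraph `H`, as a subgraph of `G`. -/
def compSub {G : SimpleGraph V} (H : G.Subgraph) (w : V) : G.Subgraph where
  verts := {z | ReachIn H w z}
  Adj a b := H.Adj a b ∧ ReachIn H w a ∧ ReachIn H w b
  adj_sub h := H.adj_sub h.1
  edge_vert h := h.2.1
  symm := ⟨fun a b h => ⟨h.1.symm, h.2.2, h.2.1⟩⟩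

section helpers
variable {G : SimpleGraph V} {M : Set (Sym2 V)} {X : Set V}

lemma sep_pair (hM : IsPerfectMatchingSet G M) (hX : IsSeparating G X)
    {u v : V} (he : s(u, v) ∈ M) : u ∈ X ↔ v ∈ X := by
  have hGadj : G.Adj u v := hM.1 he
  have : (SimpleGraph.fromEdgeSet (allowedEdges G)).Adj u v :=
    ⟨⟨M, hM, he⟩, hGadj.ne⟩
  exact hX u v this.reachable

lemma sat_cons_cons {a c d b : V} {h : G.Adj a c} {h' : G.Adj c d} {p' : G.Walk d b}
    (hp : IsSaturatedPath M (Walk.cons h (Walk.cons h' p'))) :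
    s(a, c) ∈ M ∧ s(c, d) ∉ M ∧ IsSaturatedPath M p' := by
  obtain ⟨hpath, hodd, halt, hhead⟩ := hp
  have he0 : s(a, c) ∈ M := hhead _ (by simp)
  have halt' := halt
  unfold IsAltWalk List.Chain' at halt'
  rw [Walk.edges_cons, Walk.edges_cons, List.isChain_cons_cons] at halt'
  have he1 : s(c, d) ∉ M := (halt'.1).mp he0
  refine ⟨he0, he1, ?_, ?_, ?_, ?_⟩
  · exact (((Walk.cons_isPath_iff _ _).mp hpath).1.of_cons)
  · obtain ⟨k, hk⟩ := hodd
    have : (Walk.cons h (Walk.cons h' p')).length = p'.length + 2 := by simp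
    exact ⟨k - 1, by omega⟩
  · exact halt'.2.tail
  · intro e hHead
    rcases hes : p'.edges with _ | ⟨e2, es⟩
    · simp [hes] at hHead
    · rw [hes] at hHead
      simp at hHead
      subst hHead
      have hchain := halt'.2
      rw [hes, List.isChain_cons_cons] at hchain
      by_contra hcon
      exact he1 (hchain.1.mpr hcon)

lemma adj_char {a c d b : V} (h : G.Adj a c) (h' : G.Adj c d) (p' : G.Walk d b) (x y : V) :
    (Walk.cons h (Walk.cons h' p')).toSubgraph.Adj x y ↔
      (s(x, y) = s(a, c) ∨ s(x, y) = s(c, d) ∨ p'.toSubgraph.Adj x y) := by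
  simp [Subgraph.sup_adj]
  tauto

lemma not_adj_of_not_mem_support {c b x y : V} {q : G.Walk c b} (h : x ∉ q.support) :
    ¬ q.toSubgraph.Adj x y := fun hadj => h ((Walk.mem_verts_toSubgraph q).mp hadj.fst_mem)

end helpers

variable {G : SimpleGraph V} {H H' : G.Subgraph} {w x y z : V}

lemma reachIn_iff : ReachIn H w z ↔
    w ∈ H.verts ∧ z ∈ H.verts ∧ Relation.ReflTransGen H.Adj w z := by
  constructor
  · rintro ⟨hw, hz, hr⟩
    refine ⟨hw, hz, ?_⟩
    rw [reachable_iff_reflTransGen] at hr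
    exact Relation.ReflTransGen.lift (r := H.coe.Adj) Subtype.val
      (fun a b hab => (Subgraph.coe_adj H a b).mp hab) _ _ hr
  · rintro ⟨hw, hz, hr⟩
    refine ⟨hw, hz, ?_⟩
    revert hw
    induction hr using Relation.ReflTransGen.head_induction_on with
    | refl => exact fun hw => Reachable.refl _
    | head hab _ ih =>
      rename_i a c _
      intro hw
      have hc : c ∈ H.verts := hab.snd_mem
      exact (Reachable.trans (Adj.reachable (by exact hab : H.coe.Adj ⟨a, hw⟩ ⟨c, hc⟩)) (ih hc))

lemma ReachIn.refl (hw : w ∈ H.verts) : ReachIn H w w := ⟨hw, hw, Reachable.refl _⟩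

lemma ReachIn.symm (h : ReachIn H w z) : ReachIn H z w := by
  obtain ⟨hw, hz, hr⟩ := h; exact ⟨hz, hw, hr.symm⟩

lemma ReachIn.trans (h : ReachIn H w x) (h' : ReachIn H x z) : ReachIn H w z := by
  obtain ⟨hw, hx, hr⟩ := h; obtain ⟨hx', hz, hr'⟩ := h'
  exact ⟨hw, hz, hr.trans hr'⟩

lemma ReachIn.adj (h : H.Adj x y) : ReachIn H x y :=
  reachIn_iff.mpr ⟨h.fst_mem, h.snd_mem, Relation.ReflTransGen.single h⟩

lemma ReachIn.mono (hle : H' ≤ H) (h : ReachIn H' w z) : ReachIn H w z := by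
  rw [reachIn_iff] at h ⊢
  exact ⟨hle.1 h.1, hle.1 h.2.1, Relation.ReflTransGen.mono (fun a b hab => hle.2 hab) _ _ h.2.2⟩

lemma reach_closed {S : Set V} (hS : ∀ x y, x ∈ S → H.Adj x y → y ∈ S)
    (hw : w ∈ S) (h : ReachIn H w z) : z ∈ S := by
  obtain ⟨-, -, hr⟩ := reachIn_iff.mp h
  clear h
  induction hr with
  | refl => exact hw
  | tail _ hbc ih => exact hS _ _ ih hbc

lemma compSub_congr (h : ReachIn H w z) : compSub H w = compSub H z := by
  have key : ∀ u, ReachIn H w u ↔ ReachIn H z u :=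
    fun u => ⟨fun h' => h.symm.trans h', fun h' => h.trans h'⟩
  ext a b
  · exact key a
  · exact and_congr_right fun _ => and_congr (key a) (key b)

lemma compSub_eq_self (hc : H.Connected) (hw : w ∈ H.verts) : compSub H w = H := by
  have key : ∀ u, ReachIn H w u ↔ u ∈ H.verts :=
    fun u => ⟨fun h => h.2.1, fun hu => ⟨hw, hu, hc.coe ⟨w, hw⟩ ⟨u, hu⟩⟩⟩
  ext a b
  · exact key a
  · exact ⟨fun h => h.1, fun h => ⟨h, (key a).mpr h.fst_mem, (key b).mpr h.snd_mem⟩⟩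

lemma compSub_restrict (hle : H' ≤ H) (hw : w ∈ H'.verts)
    (hcl : ∀ x y, ReachIn H' w x → H.Adj x y → H'.Adj x y) : compSub H w = compSub H' w := by
  have key : ∀ u, ReachIn H w u ↔ ReachIn H' w u := by
    intro u
    refine ⟨fun h => ?_, fun h => h.mono hle⟩
    refine reach_closed (S := {z | ReachIn H' w z}) (fun x y hx hxy => ?_) (ReachIn.refl hw) h
    exact hx.trans (ReachIn.adj (hcl x y hx hxy))
  ext a b
  · exact key a
  · constructor
    · rintro ⟨hadj, ha, hb⟩
      exact ⟨hcl a b ((key a).mp ha) hadj, (key a).mp ha, (key b).mp hb⟩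
    · rintro ⟨hadj, ha, hb⟩
      exact ⟨hle.2 hadj, (key a).mpr ha, (key b).mpr hb⟩

section main
variable {G : SimpleGraph V} {M : Set (Sym2 V)} {X : Set V}

set_option maxHeartbeats 2000000 in
lemma aux_main (hM : IsPerfectMatchingSet G M) (hX : IsSeparating G X) :
    ∀ (n : ℕ) {a b : V} (p : G.Walk a b), p.length ≤ n → IsSaturatedPath M p →
    ∀ w ∈ (p.toSubgraph.induce (X ∩ p.toSubgraph.verts)).verts,
      ∃ (x y : V) (q : G.Walk x y), IsSaturatedPath M q ∧
        q.toSubgraph = compSub (p.toSubgraph.induce (X ∩ p.toSubgraph.verts)) w ∧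
        (ReachIn (p.toSubgraph.induce (X ∩ p.toSubgraph.verts)) w a → x = a) := by
  intro n
  induction n with
  | zero =>
    intro a b p hlen hp w hw
    exfalso
    obtain ⟨k, hk⟩ := hp.2.1
    omega
  | succ n ih =>
    intro a b p hlen hp w hw
    cases p with
    | nil =>
      exfalso
      obtain ⟨k, hk⟩ := hp.2.1
      simp at hk
    | @cons _ c _ h q =>
      cases q with
      | nil =>
        -- base case: single edge a-c
        have he0 : s(a, b) ∈ M := hp.2.2.2 _ (by simp)
        have hiff := sep_pair hM hX he0
        rw [Subgraph.induce_verts] at hw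
        have hwX : w ∈ X := hw.1
        have hwsup : w = a ∨ w = b := by
          have := hw.2
          rw [Walk.mem_verts_toSubgraph] at this
          simpa using this
        have haX : a ∈ X := by
          rcases hwsup with rfl | rfl
          · exact hwX
          · exact hiff.mpr hwX
        have hcX : b ∈ X := hiff.mp haX
        have hvertseq : X ∩ (Walk.cons h Walk.nil).toSubgraph.verts
            = (Walk.cons h Walk.nil : G.Walk a b).toSubgraph.verts := by
          apply Set.eq_of_subset_of_subset (Set.inter_subset_right)
          intro u hu
          refine ⟨?_, hu⟩
          rw [Walk.mem_verts_toSubgraph] at hu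
          simp at hu
          rcases hu with rfl | rfl
          · exact haX
          · exact hcX
        have hH : (Walk.cons h Walk.nil : G.Walk a b).toSubgraph.induce
            (X ∩ (Walk.cons h Walk.nil : G.Walk a b).toSubgraph.verts)
            = (Walk.cons h Walk.nil : G.Walk a b).toSubgraph := by
          rw [hvertseq, Subgraph.induce_self_verts]
        refine ⟨a, b, Walk.cons h Walk.nil, hp, ?_, fun _ => rfl⟩
        rw [hH, compSub_eq_self (Walk.toSubgraph_connected _) hw.2]
      | @cons _ d _ h' p' =>
        obtain ⟨he0, he1, hp'⟩ := sat_cons_cons hp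
        have hcons := (Walk.cons_isPath_iff h _).mp hp.1
        have hanc : a ∉ (Walk.cons h' p').support := hcons.2
        have hcnp' : c ∉ p'.support := ((Walk.cons_isPath_iff h' p').mp hcons.1).2
        have hanp' : a ∉ p'.support := fun hm => hanc (by simp [hm])
        have hand : a ≠ d := fun he => hanp' (he ▸ p'.start_mem_support)
        have hacne : a ≠ c := h.ne
        have hcnd : c ≠ d := h'.ne
        have hiffac : (a ∈ X ↔ c ∈ X) := sep_pair hM hX he0
        have hlen' : p'.length ≤ n := by simp at hlen; omega
        rw [Subgraph.induce_verts] at hw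
        have hwX : w ∈ X := hw.1
        set PS := (Walk.cons h (Walk.cons h' p') : G.Walk a b).toSubgraph with hPS
        set H := PS.induce (X ∩ PS.verts) with hH
        set H' := p'.toSubgraph.induce (X ∩ p'.toSubgraph.verts) with hH'
        have hwsupP : w = a ∨ w = c ∨ w ∈ p'.support := by
          have := hw.2
          rw [hPS, Walk.mem_verts_toSubgraph] at this
          simpa using this
        have hHadj : ∀ x y, H.Adj x y ↔
            (x ∈ X ∧ y ∈ X ∧ (s(x, y) = s(a, c) ∨ s(x, y) = s(c, d) ∨ p'.toSubgraph.Adj x y)) := by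
          intro x y
          rw [hH, Subgraph.induce_adj]
          constructor
          · rintro ⟨hx, hy, hadj⟩
            exact ⟨hx.1, hy.1, (adj_char h h' p' x y).mp hadj⟩
          · rintro ⟨hx, hy, hadj⟩
            have hadj' := (adj_char h h' p' x y).mpr hadj
            exact ⟨⟨hx, hadj'.fst_mem⟩, ⟨hy, hadj'.snd_mem⟩, hadj'⟩
        have hH'adj : ∀ x y, H'.Adj x y ↔ (x ∈ X ∧ y ∈ X ∧ p'.toSubgraph.Adj x y) := by
          intro x y
          rw [hH', Subgraph.induce_adj]
          constructor
          · rintro ⟨hx, hy, hadj⟩; exact ⟨hx.1, hy.1, hadj⟩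
          · rintro ⟨hx, hy, hadj⟩; exact ⟨⟨hx, hadj.fst_mem⟩, ⟨hy, hadj.snd_mem⟩, hadj⟩
        have hHverts : ∀ u, u ∈ H.verts ↔ (u ∈ X ∧ (u = a ∨ u = c ∨ u ∈ p'.support)) := by
          intro u
          rw [hH, Subgraph.induce_verts]
          constructor
          · rintro ⟨h1, h2⟩
            refine ⟨h1, ?_⟩
            rw [hPS, Walk.mem_verts_toSubgraph] at h2
            simpa using h2
          · rintro ⟨h1, h2⟩
            refine ⟨h1, ?_⟩
            rw [hPS, Walk.mem_verts_toSubgraph]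
            simpa using h2
        have hH'verts : ∀ u, u ∈ H'.verts ↔ (u ∈ X ∧ u ∈ p'.support) := by
          intro u
          rw [hH', Subgraph.induce_verts]
          exact and_congr_right fun _ => Walk.mem_verts_toSubgraph p'
        have hH'le : H' ≤ H := by
          constructor
          · intro u hu
            exact (hHverts u).mpr ⟨((hH'verts u).mp hu).1, Or.inr (Or.inr ((hH'verts u).mp hu).2)⟩
          · intro u v huv
            rw [hH'adj] at huv
            rw [hHadj]
            exact ⟨huv.1, huv.2.1, Or.inr (Or.inr huv.2.2)⟩
        by_cases hcX : c ∈ X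
        · have haX : a ∈ X := hiffac.mpr hcX
          have hHac : H.Adj a c := (hHadj a c).mpr ⟨haX, hcX, Or.inl rfl⟩
          by_cases hdX : d ∈ X
          · -- case 3: a, c, d all in X
            have hHcd : H.Adj c d := (hHadj c d).mpr ⟨hcX, hdX, Or.inr (Or.inl rfl)⟩
            have haH : a ∈ H.verts := (hHverts a).mpr ⟨haX, Or.inl rfl⟩
            have hdH' : d ∈ H'.verts := (hH'verts d).mpr ⟨hdX, p'.start_mem_support⟩
            have Rad : ReachIn H a d := (ReachIn.adj hHac).trans (ReachIn.adj hHcd)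
            obtain ⟨x, y, q', hq'sat, hq'sub, hq'start⟩ :=
              ih p' hlen' hp' d (by rw [hH'] at hdH'; exact hdH')
            have hxd : d = x := (hq'start (ReachIn.refl (by rw [hH'] at hdH'; exact hdH'))).symm
            subst hxd
            have hq'sub' : q'.toSubgraph = compSub H' d := by rw [hH']; exact hq'sub
            have hq'mem : ∀ u, u ∈ q'.support ↔ ReachIn H' d u := by
              intro u
              rw [← Walk.mem_verts_toSubgraph, hq'sub']
              exact Iff.rfl
            have hq'adj : ∀ u v, q'.toSubgraph.Adj u v ↔
                (H'.Adj u v ∧ ReachIn H' d u ∧ ReachIn H' d v) := by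
              intro u v
              rw [hq'sub']
              exact Iff.rfl
            have hsupsub : ∀ u, u ∈ q'.support → u ∈ X ∧ u ∈ p'.support := by
              intro u hu
              obtain ⟨-, hz, -⟩ := (hq'mem u).mp hu
              exact (hH'verts u).mp hz
            have hqpath : (Walk.cons h (Walk.cons h' q')).IsPath := by
              rw [Walk.cons_isPath_iff, Walk.cons_isPath_iff]
              refine ⟨⟨hq'sat.1, fun hm => hcnp' (hsupsub c hm).2⟩, ?_⟩
              simp only [Walk.support_cons, List.mem_cons]
              push_neg
              exact ⟨hacne, fun hm => hanp' (hsupsub a hm).2⟩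
            obtain ⟨k', hk'⟩ := hq'sat.2.1
            have hq'edges : q'.edges ≠ [] := by
              intro hnil
              have hle := q'.length_edges
              rw [hnil] at hle
              simp at hle
              omega
            rcases hq'e : q'.edges with _ | ⟨e2, es⟩
            · exact absurd hq'e hq'edges
            have he2 : e2 ∈ M := hq'sat.2.2.2 e2 (by rw [hq'e]; rfl)
            have hqsat : IsSaturatedPath M (Walk.cons h (Walk.cons h' q')) := by
              refine ⟨hqpath, ⟨k' + 1, by simp only [Walk.length_cons, hk']; omega⟩, ?_, ?_⟩
              · unfold IsAltWalk List.Chain'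
                rw [Walk.edges_cons, Walk.edges_cons, hq'e, List.isChain_cons_cons, List.isChain_cons_cons]
                refine ⟨iff_of_true he0 he1, iff_of_false he1 (not_not_intro he2), ?_⟩
                have halt := hq'sat.2.2.1
                unfold IsAltWalk at halt
                rw [hq'e] at halt
                exact halt
              · intro e he
                simp at he
                subst he
                exact he0
            by_cases hwd : ReachIn H w d
            · have hwa : ReachIn H w a := hwd.trans Rad.symm
              have hkey3 : ∀ u, ReachIn H a u ↔ (u = a ∨ u = c ∨ ReachIn H' d u) := by
                intro u
                constructor
                · intro hr
                  refine reach_closed (S := {u | u = a ∨ u = c ∨ ReachIn H' d u}) ?_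
                    (Or.inl rfl) hr
                  intro x y hx hxy
                  rw [hHadj] at hxy
                  obtain ⟨hx1, hy1, (he | he | he)⟩ := hxy
                  · rw [Sym2.eq_iff] at he
                    rcases he with ⟨rfl, rfl⟩ | ⟨rfl, rfl⟩
                    · exact Or.inr (Or.inl rfl)
                    · exact Or.inl rfl
                  · rw [Sym2.eq_iff] at he
                    rcases he with ⟨rfl, rfl⟩ | ⟨rfl, rfl⟩
                    · exact Or.inr (Or.inr (ReachIn.refl hdH'))
                    · exact Or.inr (Or.inl rfl)
                  · have hxs : x ∈ p'.support := (Walk.mem_verts_toSubgraph p').mp he.fst_mem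
                    have hH'xy : H'.Adj x y := (hH'adj x y).mpr ⟨hx1, hy1, he⟩
                    rcases hx with rfl | rfl | hrx
                    · exact absurd hxs hanp'
                    · exact absurd hxs hcnp'
                    · exact Or.inr (Or.inr (hrx.trans (ReachIn.adj hH'xy)))
                · rintro (rfl | rfl | hr)
                  · exact ReachIn.refl haH
                  · exact ReachIn.adj hHac
                  · exact Rad.trans (hr.mono hH'le)
              refine ⟨a, y, Walk.cons h (Walk.cons h' q'), hqsat, ?_, fun _ => rfl⟩
              rw [compSub_congr hwa]
              ext u v
              · have hrfl : u ∈ (compSub H a).verts ↔ ReachIn H a u := Iff.rfl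
                rw [Walk.mem_verts_toSubgraph]
                simp only [Walk.support_cons, List.mem_cons]
                rw [hq'mem u, hrfl, hkey3 u]
              · rw [adj_char h h' q' u v]
                constructor
                · rintro (he | he | he)
                  · rw [Sym2.eq_iff] at he
                    rcases he with ⟨rfl, rfl⟩ | ⟨rfl, rfl⟩
                    · exact ⟨hHac, ReachIn.refl haH, ReachIn.adj hHac⟩
                    · exact ⟨hHac.symm, ReachIn.adj hHac, ReachIn.refl haH⟩
                  · rw [Sym2.eq_iff] at he
                    rcases he with ⟨rfl, rfl⟩ | ⟨rfl, rfl⟩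
                    · exact ⟨hHcd, ReachIn.adj hHac, Rad⟩
                    · exact ⟨hHcd.symm, Rad, ReachIn.adj hHac⟩
                  · rw [hq'adj] at he
                    obtain ⟨hadj', hru, hrv⟩ := he
                    exact ⟨hH'le.2 hadj', (hkey3 u).mpr (Or.inr (Or.inr hru)),
                      (hkey3 v).mpr (Or.inr (Or.inr hrv))⟩
                · rintro ⟨hadj, hru, hrv⟩
                  rw [hHadj] at hadj
                  obtain ⟨h1, h2, (he | he | he)⟩ := hadj
                  · exact Or.inl he
                  · exact Or.inr (Or.inl he)
                  · refine Or.inr (Or.inr ?_)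
                    rw [hq'adj]
                    have hus : u ∈ p'.support := (Walk.mem_verts_toSubgraph p').mp he.fst_mem
                    have hvs : v ∈ p'.support := (Walk.mem_verts_toSubgraph p').mp he.snd_mem
                    have hru' : ReachIn H' d u := by
                      rcases (hkey3 u).mp hru with rfl | rfl | hr
                      · exact absurd hus hanp'
                      · exact absurd hus hcnp'
                      · exact hr
                    have hrv' : ReachIn H' d v := by
                      rcases (hkey3 v).mp hrv with rfl | rfl | hr
                      · exact absurd hvs hanp'
                      · exact absurd hvs hcnp'
                      · exact hr
                    exact ⟨(hH'adj u v).mpr ⟨h1, h2, he⟩, hru', hrv'⟩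
            · have hwa' : ¬ ReachIn H w a := fun hr => hwd (hr.trans Rad)
              have hwH : w ∈ H.verts := (hHverts w).mpr ⟨hwX, hwsupP⟩
              have hwna : w ≠ a := by rintro rfl; exact hwa' (ReachIn.refl hwH)
              have hwnc : w ≠ c := by rintro rfl; exact hwd (ReachIn.adj hHcd)
              have hws : w ∈ p'.support := by
                rcases hwsupP with rfl | rfl | hws
                · exact absurd rfl hwna
                · exact absurd rfl hwnc
                · exact hws
              have hw' : w ∈ H'.verts := (hH'verts w).mpr ⟨hwX, hws⟩
              have hrestrict : compSub H w = compSub H' w := by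
                refine compSub_restrict hH'le hw' ?_
                intro x2 y2 hrx hxy
                have hrx2 := hrx
                obtain ⟨-, hxv0, -⟩ := hrx2
                rw [hH'verts] at hxv0
                rw [hHadj] at hxy
                obtain ⟨hx1, hy1, (he | he | he)⟩ := hxy
                · rw [Sym2.eq_iff] at he
                  rcases he with ⟨rfl, rfl⟩ | ⟨rfl, rfl⟩
                  · exact absurd hxv0.2 hanp'
                  · exact absurd hxv0.2 hcnp'
                · rw [Sym2.eq_iff] at he
                  rcases he with ⟨rfl, rfl⟩ | ⟨rfl, rfl⟩
                  · exact absurd hxv0.2 hcnp'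
                  · exact absurd (hrx.mono hH'le) hwd
                · exact (hH'adj x2 y2).mpr ⟨hx1, hy1, he⟩
              obtain ⟨x2, y2, q2, hq2sat, hq2sub, -⟩ :=
                ih p' hlen' hp' w (by rw [hH'] at hw'; exact hw')
              refine ⟨x2, y2, q2, hq2sat, ?_, fun hr => absurd hr hwa'⟩
              rw [hrestrict, hH']
              exact hq2sub
          · -- case 2: a, c in X, d not
            have haH : a ∈ H.verts := (hHverts a).mpr ⟨haX, Or.inl rfl⟩
            have hkey2 : ∀ u, ReachIn H a u ↔ (u = a ∨ u = c) := by
              intro u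
              constructor
              · intro hr
                refine reach_closed (S := {u | u = a ∨ u = c}) ?_ (Or.inl rfl) hr
                intro x y hx hxy
                rw [hHadj] at hxy
                obtain ⟨hx1, hy1, (he | he | he)⟩ := hxy
                · rw [Sym2.eq_iff] at he
                  rcases he with ⟨rfl, rfl⟩ | ⟨rfl, rfl⟩
                  · exact Or.inr rfl
                  · exact Or.inl rfl
                · rw [Sym2.eq_iff] at he
                  rcases he with ⟨rfl, rfl⟩ | ⟨rfl, rfl⟩
                  · exact absurd hy1 hdX
                  · rcases hx with he2 | he2
                    · exact absurd he2.symm hand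
                    · exact absurd he2.symm hcnd
                · have hxs : x ∈ p'.support := (Walk.mem_verts_toSubgraph p').mp he.fst_mem
                  rcases hx with rfl | rfl
                  · exact absurd hxs hanp'
                  · exact absurd hxs hcnp'
              · rintro (rfl | rfl)
                · exact ReachIn.refl haH
                · exact ReachIn.adj hHac
            have hchar : ∀ u v, (Walk.cons h Walk.nil : G.Walk a c).toSubgraph.Adj u v ↔
                ((u = a ∧ v = c) ∨ (u = c ∧ v = a)) := by
              intro u v
              simp [Subgraph.sup_adj]
              tauto
            by_cases hwac : w = a ∨ w = c
            · have hwa : ReachIn H w a := by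
                rcases hwac with rfl | rfl
                · exact ReachIn.refl haH
                · exact (ReachIn.adj hHac).symm
              have hq2sat : IsSaturatedPath M (Walk.cons h Walk.nil : G.Walk a c) := by
                refine ⟨?_, ⟨0, rfl⟩, ?_, ?_⟩
                · rw [Walk.cons_isPath_iff]
                  exact ⟨Walk.IsPath.nil, by simp [hacne]⟩
                · unfold IsAltWalk
                  exact List.isChain_singleton _
                · intro e he
                  simp at he
                  subst he
                  exact he0
              refine ⟨a, c, Walk.cons h Walk.nil, hq2sat, ?_, fun _ => rfl⟩
              rw [compSub_congr hwa]
              ext u v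
              · have hrfl : u ∈ (compSub H a).verts ↔ ReachIn H a u := Iff.rfl
                rw [hrfl, hkey2 u, Walk.mem_verts_toSubgraph]
                simp
              · rw [hchar u v]
                constructor
                · rintro (⟨rfl, rfl⟩ | ⟨rfl, rfl⟩)
                  · exact ⟨hHac, ReachIn.refl haH, ReachIn.adj hHac⟩
                  · exact ⟨hHac.symm, ReachIn.adj hHac, ReachIn.refl haH⟩
                · rintro ⟨hadj, ru, rv⟩
                  have hu2 := (hkey2 u).mp ru
                  have hv2 := (hkey2 v).mp rv
                  rw [hHadj] at hadj
                  obtain ⟨h1, h2, (he | he | he)⟩ := hadj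
                  · rw [Sym2.eq_iff] at he
                    exact he
                  · rw [Sym2.eq_iff] at he
                    rcases he with ⟨rfl, rfl⟩ | ⟨rfl, rfl⟩
                    · rcases hv2 with he2 | he2
                      · exact absurd he2.symm hand
                      · exact absurd he2.symm hcnd
                    · rcases hu2 with he2 | he2
                      · exact absurd he2.symm hand
                      · exact absurd he2.symm hcnd
                  · have hus : u ∈ p'.support := (Walk.mem_verts_toSubgraph p').mp he.fst_mem
                    rcases hu2 with rfl | rfl
                    · exact absurd hus hanp'
                    · exact absurd hus hcnp'
            · push_neg at hwac
              have hws : w ∈ p'.support := by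
                rcases hwsupP with rfl | rfl | hws
                · exact absurd rfl hwac.1
                · exact absurd rfl hwac.2
                · exact hws
              have hw' : w ∈ H'.verts := (hH'verts w).mpr ⟨hwX, hws⟩
              have hrestrict : compSub H w = compSub H' w := by
                refine compSub_restrict hH'le hw' ?_
                intro x y hrx hxy
                obtain ⟨-, hxv, -⟩ := hrx
                rw [hH'verts] at hxv
                rw [hHadj] at hxy
                obtain ⟨hx1, hy1, (he | he | he)⟩ := hxy
                · rw [Sym2.eq_iff] at he
                  rcases he with ⟨rfl, rfl⟩ | ⟨rfl, rfl⟩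
                  · exact absurd hxv.2 hanp'
                  · exact absurd hxv.2 hcnp'
                · rw [Sym2.eq_iff] at he
                  rcases he with ⟨rfl, rfl⟩ | ⟨rfl, rfl⟩
                  · exact absurd hxv.2 hcnp'
                  · exact absurd hxv.1 hdX
                · exact (hH'adj x y).mpr ⟨hx1, hy1, he⟩
              obtain ⟨x, y, q, hqsat, hqsub, -⟩ :=
                ih p' hlen' hp' w (by rw [hH'] at hw'; exact hw')
              refine ⟨x, y, q, hqsat, ?_, ?_⟩
              · rw [hrestrict, hH']
                exact hqsub
              · intro hr
                exfalso
                rcases (hkey2 w).mp hr.symm with he | he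
                · exact hwac.1 he
                · exact hwac.2 he
        · -- case 1: a, c not in X
          have haX : a ∉ X := fun hh => hcX (hiffac.mp hh)
          have hHeq : H = H' := by
            ext u v
            · rw [hHverts, hH'verts]
              constructor
              · rintro ⟨h1, (rfl | rfl | h2)⟩
                · exact absurd h1 haX
                · exact absurd h1 hcX
                · exact ⟨h1, h2⟩
              · rintro ⟨h1, h2⟩
                exact ⟨h1, Or.inr (Or.inr h2)⟩
            · rw [hHadj, hH'adj]
              constructor
              · rintro ⟨h1, h2, (he | he | he)⟩
                · rw [Sym2.eq_iff] at he
                  rcases he with ⟨rfl, rfl⟩ | ⟨rfl, rfl⟩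
                  · exact absurd h1 haX
                  · exact absurd h1 hcX
                · rw [Sym2.eq_iff] at he
                  rcases he with ⟨rfl, rfl⟩ | ⟨rfl, rfl⟩
                  · exact absurd h1 hcX
                  · exact absurd h2 hcX
                · exact ⟨h1, h2, he⟩
              · rintro ⟨h1, h2, he⟩
                exact ⟨h1, h2, Or.inr (Or.inr he)⟩
          have hw' : w ∈ H'.verts := by
            rw [hH'verts]
            rcases hwsupP with rfl | rfl | hws
            · exact absurd hwX haX
            · exact absurd hwX hcX
            · exact ⟨hwX, hws⟩
          obtain ⟨x, y, q, hqsat, hqsub, -⟩ :=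
            ih p' hlen' hp' w (by rw [hH'] at hw'; exact hw')
          refine ⟨x, y, q, hqsat, ?_, ?_⟩
          · rw [hHeq, hH']
            exact hqsub
          · intro hr
            exfalso
            obtain ⟨-, haH, -⟩ := hr
            rw [hHverts] at haH
            exact haX haH.1

end main


theorem stmt15 [Finite V] (G : SimpleGraph V) (M : Set (Sym2 V))
    (hM : IsPerfectMatchingSet G M) (X : Set V) (hX : IsSeparating G X)
    {a b : V} (p : G.Walk a b) (hp : IsSaturatedPath M p) :
    ∀ w ∈ (p.toSubgraph.induce (X ∩ p.toSubgraph.verts)).verts,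
      ∃ (x y : V) (q : G.Walk x y), IsSaturatedPath M q ∧
        q.toSubgraph = compSub (p.toSubgraph.induce (X ∩ p.toSubgraph.verts)) w := by
  intro w hw
  obtain ⟨x, y, q, hq, hsub, -⟩ := aux_main hM hX p.length p le_rfl hp w hw
  exact ⟨x, y, q, hq, hsub⟩
end

section
/- Let G₀ be a saturated elementary graph with canonical partition P(G₀), and let {G_S}_{S ∈ P(G₀)} be a family of saturated graphs (some possibly empty), vertex-disjoint from G₀ and from each other. Let G be the graph obtained from the disjoint union of G₀ and all G_S by joining every vertex of S to every vertex of G_S, for each S ∈ P(G₀). Then the graph G' := G / V(G₀) obtained by contracting V(G₀) to a single vertex is factor-critical. -/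
open SimpleGraph

variable {V : Type*}

/-- A graph is elementary: factorizable with all vertices in one factor-connected component. -/
def Elementary (G : SimpleGraph V) : Prop :=
  Factorizable G ∧ ∀ u v : V, SameFC G u v

/-- A graph is factor-critical if deleting any vertex leaves a factorizable graph. -/
def FactorCritical (G : SimpleGraph V) : Prop :=
  ∀ w : V, Factorizable (G.induce ({w}ᶜ : Set V))

/-- Kotzig's canonical relation on the induced (elementary) subgraph `G[B]`:
`a ∼ b` iff `a, b ∈ B` and (`a = b` or `G[B] - a - b` is not factorizable). -/
def CanonRelIn (G : SimpleGraph V) (B : Set V) (a b : V) : Prop :=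
  a ∈ B ∧ b ∈ B ∧ (a = b ∨ ¬ Factorizable (G.induce (B \ {a, b})))

/-- `S` is a class of Kotzig's canonical partition of `G[B]`. -/
def CanonClassIn (G : SimpleGraph V) (B : Set V) (S : Set V) : Prop :=
  ∃ b ∈ B, S = {b' | CanonRelIn G B b b'}

/-- Representatives of a vertex of the contraction `G / B`. -/
def ContractRep (B : Set V) : Option ↥(Bᶜ : Set V) → V → Prop
  | none, u => u ∈ B
  | some w, u => u = (w : V)

/-- The contraction `G / B` of the vertex set `B` to a single vertex. -/
def contractSet (G : SimpleGraph V) (B : Set V) : SimpleGraph (Option ↥(Bᶜ : Set V)) where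
  Adj x y := x ≠ y ∧ ∃ u v, ContractRep B x u ∧ ContractRep B y v ∧ G.Adj u v
  symm := by
    constructor
    rintro x y ⟨hxy, u, v, hu, hv, h⟩
    exact ⟨hxy.symm, v, u, hv, hu, h.symm⟩
  loopless := by constructor; rintro x ⟨h, -⟩; exact h rfl

/-- `N` is a perfect matching of the induced subgraph `G[s]`, given as edges of `G`. -/
def PMon (G : SimpleGraph V) (s : Set V) (N : Set (Sym2 V)) : Prop :=
  N ⊆ G.edgeSet ∧ (∀ e ∈ N, ∀ a : V, a ∈ e → a ∈ s) ∧ ∀ v ∈ s, ∃! e, e ∈ N ∧ v ∈ e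

lemma factorizable_of_partner {W : Type*} (H : SimpleGraph W) (t : Set W) (p : W → W)
    (hmem : ∀ v ∈ t, p v ∈ t) (hinv : ∀ v ∈ t, p (p v) = v)
    (hadj : ∀ v ∈ t, H.Adj v (p v)) :
    Factorizable (H.induce t) := by
  classical
  refine ⟨{e | ∃ v : ↥t, e = s(v, (⟨p ↑v, hmem ↑v v.2⟩ : ↥t))}, ?_, ?_⟩
  · rintro e ⟨v, rfl⟩
    exact hadj ↑v v.2
  · intro v
    refine ⟨s(v, ⟨p ↑v, hmem ↑v v.2⟩), ⟨⟨v, rfl⟩, by simp⟩, ?_⟩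
    rintro e ⟨⟨u, rfl⟩, hv⟩
    rcases Sym2.mem_iff.mp hv with h | h
    · subst h; rfl
    · have h1 : (v : W) = p ↑u := congrArg Subtype.val h
      have h2 : (u : W) = p ↑v := by
        rw [h1, hinv ↑u u.2]
      rw [Sym2.eq_swap]
      exact congrArg₂ (fun a b => s(a, b)) h.symm
        (Subtype.ext h2 : u = (⟨p ↑v, hmem ↑v v.2⟩ : ↥t))

lemma partner_of_factorizable {G : SimpleGraph V} {t : Set V}
    (h : Factorizable (G.induce t)) :
    ∃ p : V → V, ∀ v ∈ t, p v ∈ t ∧ p (p v) = v ∧ G.Adj v (p v) := by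
  classical
  obtain ⟨M, hsub, hM⟩ := h
  have hM' : ∀ v : ↥t, ∃ e, (e ∈ M ∧ v ∈ e) ∧ ∀ y, (y ∈ M ∧ v ∈ y) → y = e := hM
  choose e hprop using hM'
  have hme : ∀ v, e v ∈ M := fun v => (hprop v).1.1
  have hve : ∀ v, v ∈ e v := fun v => (hprop v).1.2
  have hu : ∀ v, ∀ y, (y ∈ M ∧ v ∈ y) → y = e v := fun v => (hprop v).2
  set q : ↥t → ↥t := fun v => Sym2.Mem.other (hve v) with hq
  have hspec : ∀ v, s(v, q v) = e v := fun v => Sym2.other_spec (hve v)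
  have hadj : ∀ v : ↥t, G.Adj ↑v ↑(q v) := by
    intro v
    have : s(v, q v) ∈ (G.induce t).edgeSet := by rw [hspec v]; exact hsub (hme v)
    rw [SimpleGraph.mem_edgeSet] at this
    exact this
  have hne : ∀ v, q v ≠ v := fun v => fun hh => (hadj v).ne (by rw [hh])
  have hqq : ∀ v, q (q v) = v := by
    intro v
    have he : e (q v) = e v :=
      (hu (q v) (e v) ⟨hme v, (hspec v) ▸ Sym2.mem_mk_right v (q v)⟩).symm
    have : s(q v, q (q v)) = s(v, q v) := by rw [hspec (q v), he, hspec v]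
    rcases Sym2.eq_iff.mp this with ⟨h1, _⟩ | ⟨_, h2⟩
    · exact absurd h1 (hne v)
    · exact h2
  refine ⟨fun v => if hv : v ∈ t then ↑(q ⟨v, hv⟩) else v, ?_⟩
  intro v hv
  dsimp only
  have h1 : (if hv : v ∈ t then ((q ⟨v, hv⟩ : ↥t) : V) else v) = ↑(q ⟨v, hv⟩) :=
    dif_pos hv
  rw [h1]
  refine ⟨(q ⟨v, hv⟩).2, ?_, hadj ⟨v, hv⟩⟩
  have h2 : ((q ⟨v, hv⟩ : ↥t) : V) ∈ t := (q ⟨v, hv⟩).2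
  rw [dif_pos h2]
  show ((q ⟨↑(q ⟨v, hv⟩), h2⟩ : ↥t) : V) = v
  have : (⟨↑(q ⟨v, hv⟩), h2⟩ : ↥t) = q ⟨v, hv⟩ := rfl
  rw [this, hqq]

theorem stmt16 [Finite V] (G : SimpleGraph V) (B : Set V) (T : Set V → Set V)
    (hBsat : Saturated (G.induce B)) (hBelem : Elementary (G.induce B))
    (hTsub : ∀ S, CanonClassIn G B S → T S ⊆ (Bᶜ : Set V))
    (hTdis : ∀ S S', CanonClassIn G B S → CanonClassIn G B S' → S ≠ S' →
      Disjoint (T S) (T S'))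
    (hTcover : ∀ w ∈ (Bᶜ : Set V), ∃ S, CanonClassIn G B S ∧ w ∈ T S)
    (hTsat : ∀ S, CanonClassIn G B S → Saturated (G.induce (T S)))
    (hjoin : ∀ S, CanonClassIn G B S → ∀ a ∈ S, ∀ b ∈ T S, G.Adj a b)
    (hedges : ∀ a b : V, G.Adj a b → (a ∈ B ∧ b ∈ B) ∨
      ∃ S, CanonClassIn G B S ∧
        ((a ∈ T S ∧ b ∈ T S) ∨ (a ∈ S ∧ b ∈ T S) ∨ (a ∈ T S ∧ b ∈ S))) :
    FactorCritical (contractSet G B) := by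
  classical
  choose S hScls hSmem using fun v : ↥(Bᶜ : Set V) => hTcover ↑v v.2
  have pex : ∀ t : Set V, ∃ p : V → V, Factorizable (G.induce t) →
      ∀ v ∈ t, p v ∈ t ∧ p (p v) = v ∧ G.Adj v (p v) := by
    intro t
    by_cases h : Factorizable (G.induce t)
    · obtain ⟨p, hp⟩ := partner_of_factorizable h
      exact ⟨p, fun _ => hp⟩
    · exact ⟨id, fun h' => absurd h' h⟩
  choose p hp using pex
  have hcoh : ∀ (v : ↥(Bᶜ : Set V)) (S' : Set V), CanonClassIn G B S' → (v : V) ∈ T S' →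
      S v = S' := by
    intro v S' hcl hmem
    by_contra hne
    exact Set.disjoint_left.mp (hTdis _ _ (hScls v) hcl hne) (hSmem v) hmem
  set P : V → V := fun v => if hv : v ∈ (Bᶜ : Set V) then p (T (S ⟨v, hv⟩)) v else v
    with hPdef
  have hfact : ∀ v : ↥(Bᶜ : Set V), Factorizable (G.induce (T (S v))) :=
    fun v => (hTsat _ (hScls v)).1
  have hPeq : ∀ v : ↥(Bᶜ : Set V), P ↑v = p (T (S v)) ↑v := fun v => dif_pos v.2
  have hPmemT : ∀ v : ↥(Bᶜ : Set V), P ↑v ∈ T (S v) := by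
    intro v; rw [hPeq v]; exact (hp _ (hfact v) ↑v (hSmem v)).1
  have hPmem : ∀ v : ↥(Bᶜ : Set V), P ↑v ∈ (Bᶜ : Set V) :=
    fun v => hTsub _ (hScls v) (hPmemT v)
  have hPadj : ∀ v : ↥(Bᶜ : Set V), G.Adj ↑v (P ↑v) := by
    intro v; rw [hPeq v]; exact (hp _ (hfact v) ↑v (hSmem v)).2.2
  have hPP : ∀ v : ↥(Bᶜ : Set V), P (P ↑v) = ↑v := by
    intro v
    have h1 : P (P ↑v) = p (T (S ⟨P ↑v, hPmem v⟩)) (P ↑v) := dif_pos (hPmem v)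
    have h2 : S (⟨P ↑v, hPmem v⟩ : ↥(Bᶜ : Set V)) = S v :=
      hcoh ⟨P ↑v, hPmem v⟩ (S v) (hScls v) (hPmemT v)
    rw [h1, h2, hPeq v]
    exact (hp _ (hfact v) ↑v (hSmem v)).2.1
  intro w
  match w with
  | none =>
    refine factorizable_of_partner _ _
      (fun x => x.map fun u : ↥(Bᶜ : Set V) => (⟨P ↑u, hPmem u⟩ : ↥(Bᶜ : Set V)))
      ?_ ?_ ?_
    · rintro (_ | u) hv
      · simp at hv
      · simp
    · rintro (_ | u) hv
      · simp at hv
      · exact congrArg some (Subtype.ext (hPP u))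
    · rintro (_ | u) hv
      · simp at hv
      · exact ⟨fun hc => (hPadj u).ne (congrArg Subtype.val (Option.some.inj hc)),
          ↑u, P ↑u, rfl, rfl, hPadj u⟩
  | some w₀ =>
    obtain ⟨b₀, hb₀B, hSeq⟩ := hScls w₀
    have hb₀S : b₀ ∈ S w₀ := by rw [hSeq]; exact ⟨hb₀B, hb₀B, Or.inl rfl⟩
    have hbadj : G.Adj b₀ (P ↑w₀) := hjoin _ (hScls w₀) b₀ hb₀S _ (hPmemT w₀)
    refine factorizable_of_partner _ _
      (fun x => match x with
        | none => some (⟨P ↑w₀, hPmem w₀⟩ : ↥(Bᶜ : Set V))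
        | some u => if (u : V) = P ↑w₀ then none
            else some (⟨P ↑u, hPmem u⟩ : ↥(Bᶜ : Set V))) ?_ ?_ ?_
    · rintro (_ | u) hv
      · intro hc
        have : P ↑w₀ = ↑w₀ := congrArg Subtype.val (Option.some.inj hc)
        exact (hPadj w₀).ne' this
      · by_cases h : (u : V) = P ↑w₀
        · simp [h]
        · simp only [if_neg h]
          intro hc
          have h1 : P ↑u = ↑w₀ := congrArg Subtype.val (Option.some.inj hc)
          have h2 : (u : V) = P ↑w₀ := by
            rw [← hPP u, h1]
          exact h h2
    · rintro (_ | u) hv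
      · simp
      · by_cases h : (u : V) = P ↑w₀
        · simp only [if_pos h]
          exact congrArg some (Subtype.ext h.symm)
        · simp only [if_neg h]
          have hne2 : ¬ (P ↑u = P ↑w₀) := by
            intro hc
            have : (u : V) = ↑w₀ := by rw [← hPP u, hc, hPP w₀]
            exact hv (by simp [Subtype.ext this])
          simp only [if_neg hne2]
          exact congrArg some (Subtype.ext (hPP u))
    · rintro (_ | u) hv
      · exact ⟨fun hc => (nomatch hc), b₀, P ↑w₀, hb₀B, rfl, hbadj⟩
      · by_cases h : (u : V) = P ↑w₀
        · simp only [if_pos h]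
          exact ⟨fun hc => (nomatch hc), ↑u, b₀, rfl, hb₀B,
            by rw [h]; exact hbadj.symm⟩
        · simp only [if_neg h]
          exact ⟨fun hc => (hPadj u).ne (congrArg Subtype.val (Option.some.inj hc)),
            ↑u, P ↑u, rfl, rfl, hPadj u⟩
end

section
/- Let G₀ be a saturated elementary graph and {G_S}_{S ∈ P(G₀)} a family of saturated graphs. Then the graph G obtained by the cathedral construction—joining every vertex of S to every vertex of G_S for each class S of the canonical partition P(G₀)—is saturated. -/
open SimpleGraph

variable {V : Type*}

section Aux
variable {V : Type*}

lemma pmon_mono {G G' : SimpleGraph V} (h : G ≤ G') {s : Set V} {N : Set (Sym2 V)}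
    (hN : PMon G s N) : PMon G' s N :=
  ⟨fun e he => SimpleGraph.edgeSet_mono h (hN.1 he), hN.2.1, hN.2.2⟩

lemma pmon_single {G : SimpleGraph V} {a b : V} (h : G.Adj a b) :
    PMon G {a, b} {s(a, b)} := by
  refine ⟨?_, ?_, ?_⟩
  · intro e he; simp at he; subst he; exact h
  · intro e he c hc; simp at he; subst he; simp at hc; rcases hc with rfl | rfl <;> simp
  · intro v hv
    refine ⟨s(a, b), ⟨rfl, ?_⟩, ?_⟩
    · simp at hv; rcases hv with rfl | rfl <;> simp
    · rintro f ⟨hf, -⟩; simpa using hf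

lemma pmon_union {G : SimpleGraph V} {s t : Set V} {N N' : Set (Sym2 V)}
    (hst : Disjoint s t) (hN : PMon G s N) (hN' : PMon G t N') :
    PMon G (s ∪ t) (N ∪ N') := by
  refine ⟨?_, ?_, ?_⟩
  · rintro e (he | he); exacts [hN.1 he, hN'.1 he]
  · rintro e (he | he) a ha
    exacts [Or.inl (hN.2.1 e he a ha), Or.inr (hN'.2.1 e he a ha)]
  · rintro v (hv | hv)
    · obtain ⟨e, ⟨he, hve⟩, hu⟩ := hN.2.2 v hv
      refine ⟨e, ⟨Or.inl he, hve⟩, ?_⟩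
      rintro f ⟨hf | hf, hvf⟩
      · exact hu f ⟨hf, hvf⟩
      · exact absurd rfl (hst.ne_of_mem hv (hN'.2.1 f hf v hvf))
    · obtain ⟨e, ⟨he, hve⟩, hu⟩ := hN'.2.2 v hv
      refine ⟨e, ⟨Or.inr he, hve⟩, ?_⟩
      rintro f ⟨hf | hf, hvf⟩
      · exact absurd rfl (hst.ne_of_mem (hN.2.1 f hf v hvf) hv)
      · exact hu f ⟨hf, hvf⟩

lemma pmon_remove {G : SimpleGraph V} {s : Set V} {N : Set (Sym2 V)} {e : Sym2 V}
    (h : PMon G s N) (he : e ∈ N) :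
    PMon G (s \ {u | u ∈ e}) (N \ {e}) := by
  refine ⟨fun f hf => h.1 hf.1, ?_, ?_⟩
  · rintro f ⟨hf, hfe⟩ a ha
    refine ⟨h.2.1 f hf a ha, fun hae => hfe ?_⟩
    obtain ⟨g, -, hu⟩ := h.2.2 a (h.2.1 f hf a ha)
    simp only [Set.mem_singleton_iff]
    rw [hu f ⟨hf, ha⟩, hu e ⟨he, hae⟩]
  · rintro v ⟨hv, hve⟩
    obtain ⟨f, ⟨hf, hvf⟩, hu⟩ := h.2.2 v hv
    refine ⟨f, ⟨⟨hf, fun hfe => hve (by rw [Set.mem_singleton_iff] at hfe; exact hfe ▸ hvf)⟩, hvf⟩, ?_⟩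
    rintro g ⟨⟨hg, -⟩, hvg⟩
    exact hu g ⟨hg, hvg⟩

lemma pm_of_pmon_univ {G : SimpleGraph V} {N : Set (Sym2 V)}
    (h : PMon G Set.univ N) : IsPerfectMatchingSet G N :=
  ⟨h.1, fun v => h.2.2 v (Set.mem_univ v)⟩

lemma pmon_congr {G : SimpleGraph V} {s t : Set V} {N : Set (Sym2 V)}
    (hst : s = t) (h : PMon G s N) : PMon G t N := hst ▸ h

end Aux
section Aux2
variable {V : Type*}

lemma pmon_of_pm_induce {G : SimpleGraph V} {s : Set V} {M : Set (Sym2 ↥s)}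
    (h : IsPerfectMatchingSet (G.induce s) M) :
    PMon G s (Sym2.map (Subtype.val) '' M) := by
  refine ⟨?_, ?_, ?_⟩
  · rintro e ⟨e', he', rfl⟩
    induction e' using Sym2.ind with
    | _ a b => exact h.1 he'
  · rintro e ⟨e', he', rfl⟩ a ha
    induction e' using Sym2.ind with
    | _ u w =>
      simp only [Sym2.map_pair_eq, Sym2.mem_iff] at ha
      rcases ha with rfl | rfl
      exacts [u.2, w.2]
  · intro v hv
    obtain ⟨e', ⟨he', hve'⟩, hu⟩ := h.2 ⟨v, hv⟩
    refine ⟨Sym2.map Subtype.val e', ⟨⟨e', he', rfl⟩, ?_⟩, ?_⟩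
    · induction e' using Sym2.ind with
      | _ u w =>
        simp only [Sym2.mem_iff] at hve'
        simp only [Sym2.map_pair_eq, Sym2.mem_iff]
        rcases hve' with h' | h' <;> [left; right] <;> rw [← h']
    · rintro f ⟨⟨f', hf', rfl⟩, hvf⟩
      have : (⟨v, hv⟩ : ↥s) ∈ f' := by
        induction f' using Sym2.ind with
        | _ u w =>
          simp only [Sym2.map_pair_eq, Sym2.mem_iff] at hvf
          simp only [Sym2.mem_iff]
          rcases hvf with h' | h' <;> [left; right] <;> exact Subtype.ext h'
      rw [hu f' ⟨hf', this⟩]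

lemma induce_sup_edge {G : SimpleGraph V} {s : Set V} {x y : V} (hx : x ∈ s) (hy : y ∈ s) :
    (G ⊔ SimpleGraph.fromEdgeSet {s(x, y)}).induce s =
      (G.induce s) ⊔ SimpleGraph.fromEdgeSet {s((⟨x, hx⟩ : ↥s), (⟨y, hy⟩ : ↥s))} := by
  ext a b
  simp only [SimpleGraph.comap_adj, Function.Embedding.coe_subtype, SimpleGraph.sup_adj,
     SimpleGraph.fromEdgeSet_adj, Set.mem_singleton_iff, Sym2.eq_iff]
  constructor
  · rintro (h | ⟨(⟨rfl, rfl⟩ | ⟨rfl, rfl⟩), hne⟩)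
    · exact Or.inl h
    · exact Or.inr ⟨Or.inl ⟨Subtype.ext rfl, Subtype.ext rfl⟩, fun h => hne (congrArg Subtype.val h)⟩
    · exact Or.inr ⟨Or.inr ⟨Subtype.ext rfl, Subtype.ext rfl⟩, fun h => hne (congrArg Subtype.val h)⟩
  · rintro (h | ⟨(⟨rfl, rfl⟩ | ⟨rfl, rfl⟩), hne⟩)
    · exact Or.inl h
    · exact Or.inr ⟨Or.inl ⟨rfl, rfl⟩, fun h => hne (Subtype.ext h)⟩
    · exact Or.inr ⟨Or.inr ⟨rfl, rfl⟩, fun h => hne (Subtype.ext h)⟩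

lemma exists_pm_with_edge {W : Type*} [Finite W] {G : SimpleGraph W} {e : Sym2 W}
    (h : {N | IsPerfectMatchingSet G N}.ncard <
      {N | IsPerfectMatchingSet (G ⊔ SimpleGraph.fromEdgeSet {e}) N}.ncard) :
    ∃ N, IsPerfectMatchingSet (G ⊔ SimpleGraph.fromEdgeSet {e}) N ∧ e ∈ N := by
  by_contra hc
  push_neg at hc
  refine absurd (Set.ncard_le_ncard ?_ (Set.toFinite _)) (not_le.mpr h)
  intro N hN
  refine ⟨fun f hf => ?_, hN.2⟩
  have := hN.1 hf
  rw [SimpleGraph.edgeSet_sup] at this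
  rcases this with h' | h'
  · exact h'
  · exfalso
    rw [SimpleGraph.edgeSet_fromEdgeSet] at h'
    exact hc N hN (h'.1 ▸ hf)

lemma lt_of_pm_with_edge [Finite V] {G : SimpleGraph V} {e : Sym2 V} (he : e ∉ G.edgeSet)
    (h : ∃ N, IsPerfectMatchingSet (G ⊔ SimpleGraph.fromEdgeSet {e}) N ∧ e ∈ N) :
    {N | IsPerfectMatchingSet G N}.ncard <
      {N | IsPerfectMatchingSet (G ⊔ SimpleGraph.fromEdgeSet {e}) N}.ncard := by
  obtain ⟨N, hN, heN⟩ := h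
  refine Set.ncard_lt_ncard ⟨fun M hM => ⟨fun f hf => ?_, hM.2⟩, fun hsub => ?_⟩ (Set.toFinite _)
  · rw [SimpleGraph.edgeSet_sup]; exact Or.inl (hM.1 hf)
  · exact he ((hsub hN).1 heN)

lemma pmon_partner {G : SimpleGraph V} {s : Set V} {N : Set (Sym2 V)} {v : V}
    (h : PMon G s N) (hv : v ∈ s) :
    ∃ t, t ≠ v ∧ s(v, t) ∈ N ∧ t ∈ s ∧ {u | u ∈ s(v, t)} = {v, t} := by
  obtain ⟨e, ⟨he, hve⟩, -⟩ := h.2.2 v hv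
  refine ⟨Sym2.Mem.other hve, ?_, ?_, ?_, ?_⟩
  · exact Sym2.other_ne (SimpleGraph.not_isDiag_of_mem_edgeSet G (h.1 he)) hve
  · rwa [Sym2.other_spec hve]
  · exact h.2.1 e he _ (Sym2.other_mem hve)
  · ext u
    simp only [Set.mem_setOf_eq, Sym2.mem_iff, Set.mem_insert_iff, Set.mem_singleton_iff]

end Aux2
section Aux3
variable {V : Type*}

lemma pmon_of_factorizable {G : SimpleGraph V} {s : Set V}
    (h : Factorizable (G.induce s)) : ∃ N, PMon G s N := by
  obtain ⟨M, hM⟩ := h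
  exact ⟨_, pmon_of_pm_induce hM⟩

lemma saturated_extract [Finite V] {G : SimpleGraph V} {s : Set V} {x y : V}
    (hs : Saturated (G.induce s)) (hx : x ∈ s) (hy : y ∈ s) (hxy : x ≠ y)
    (hadj : ¬ G.Adj x y) :
    ∃ N, PMon (G ⊔ SimpleGraph.fromEdgeSet {s(x, y)}) s N ∧ s(x, y) ∈ N := by
  have hne : (⟨x, hx⟩ : ↥s) ≠ ⟨y, hy⟩ := fun h => hxy (congrArg Subtype.val h)
  have hadj' : ¬ (G.induce s).Adj ⟨x, hx⟩ ⟨y, hy⟩ := fun h => hadj h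
  obtain ⟨M, hM, heM⟩ := exists_pm_with_edge (hs.2 _ _ hne hadj')
  rw [← induce_sup_edge hx hy] at hM
  exact ⟨_, pmon_of_pm_induce hM, ⟨_, heM, by simp⟩⟩

end Aux3
set_option maxHeartbeats 2000000 in
theorem stmt17 [Finite V] (G : SimpleGraph V) (B : Set V) (T : Set V → Set V)
    (hBsat : Saturated (G.induce B)) (hBelem : Elementary (G.induce B))
    (hTsub : ∀ S, CanonClassIn G B S → T S ⊆ (Bᶜ : Set V))
    (hTdis : ∀ S S', CanonClassIn G B S → CanonClassIn G B S' → S ≠ S' →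
      Disjoint (T S) (T S'))
    (hTcover : ∀ w ∈ (Bᶜ : Set V), ∃ S, CanonClassIn G B S ∧ w ∈ T S)
    (hTsat : ∀ S, CanonClassIn G B S → Saturated (G.induce (T S)))
    (hjoin : ∀ S, CanonClassIn G B S → ∀ a ∈ S, ∀ b ∈ T S, G.Adj a b)
    (hedges : ∀ a b : V, G.Adj a b → (a ∈ B ∧ b ∈ B) ∨
      ∃ S, CanonClassIn G B S ∧
        ((a ∈ T S ∧ b ∈ T S) ∨ (a ∈ S ∧ b ∈ T S) ∨ (a ∈ T S ∧ b ∈ S))) :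
    Saturated G := by
  classical
  -- choice of perfect matchings on the towers
  let f : Set V → Set (Sym2 V) := fun S =>
    if h : CanonClassIn G B S then (pmon_of_factorizable (hTsat S h).1).choose else ∅
  have hf : ∀ S, CanonClassIn G B S → PMon G (T S) (f S) := by
    intro S h
    simp only [f, dif_pos h]
    exact (pmon_of_factorizable (hTsat S h).1).choose_spec
  -- the union of tower matchings outside an excluded collection E
  have htw : ∀ E : Set (Set V),
      PMon G (⋃ S ∈ {S | CanonClassIn G B S} \ E, T S)
        (⋃ S ∈ {S | CanonClassIn G B S} \ E, f S) := by
    intro E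
    refine ⟨?_, ?_, ?_⟩
    · intro e he
      simp only [Set.mem_iUnion, exists_prop] at he
      obtain ⟨S, ⟨hS, -⟩, he⟩ := he
      exact (hf S hS).1 he
    · intro e he a ha
      simp only [Set.mem_iUnion, exists_prop] at he ⊢
      obtain ⟨S, hS, he⟩ := he
      exact ⟨S, hS, (hf S hS.1).2.1 e he a ha⟩
    · intro v hv
      simp only [Set.mem_iUnion, exists_prop] at hv
      obtain ⟨S, hS, hv⟩ := hv
      obtain ⟨e, ⟨he, hve⟩, hu⟩ := (hf S hS.1).2.2 v hv
      refine ⟨e, ⟨by simp only [Set.mem_iUnion, exists_prop]; exact ⟨S, hS, he⟩, hve⟩, ?_⟩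
      rintro g ⟨hg, hvg⟩
      simp only [Set.mem_iUnion, exists_prop] at hg
      obtain ⟨S', hS', hg⟩ := hg
      by_cases hSS : S = S'
      · subst hSS
        exact hu g ⟨hg, hvg⟩
      · exact absurd rfl ((hTdis S S' hS.1 hS'.1 hSS).ne_of_mem hv
          ((hf S' hS'.1).2.1 g hg v hvg))
  have hcupE : ∀ E : Set (Set V), (∀ S ∈ E, CanonClassIn G B S) →
      (⋃ S ∈ {S | CanonClassIn G B S} \ E, T S) = Bᶜ \ (⋃ S ∈ E, T S) := by
    intro E hE
    ext v
    simp only [Set.mem_iUnion, exists_prop, Set.mem_diff, Set.mem_compl_iff, Set.mem_setOf_eq]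
    constructor
    · rintro ⟨S, ⟨hS, hSE⟩, hv⟩
      refine ⟨fun hvB => (hTsub S hS hv) hvB, ?_⟩
      rintro ⟨S', hS', hv'⟩
      exact absurd rfl ((hTdis S S' hS (hE S' hS') (fun h => hSE (h ▸ hS'))).ne_of_mem hv hv')
    · rintro ⟨hvB, hnv⟩
      obtain ⟨S, hS, hv⟩ := hTcover v hvB
      exact ⟨S, ⟨hS, fun hSE => hnv ⟨S, hSE, hv⟩⟩, hv⟩
  have hE0 : (⋃ S ∈ {S | CanonClassIn G B S} \ (∅ : Set (Set V)), T S) = Bᶜ := by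
    rw [hcupE ∅ (by simp)]; simp
  obtain ⟨NB, hNB⟩ := pmon_of_factorizable hBsat.1
  constructor
  · -- G is factorizable
    refine ⟨NB ∪ _, pm_of_pmon_univ (pmon_congr (Set.union_compl_self B)
      (pmon_union disjoint_compl_right hNB (pmon_congr hE0 (htw ∅))))⟩
  · intro x y hxy hadj
    apply lt_of_pm_with_edge (by rwa [SimpleGraph.mem_edgeSet])
    have hle : G ≤ G ⊔ SimpleGraph.fromEdgeSet {s(x, y)} := le_sup_left
    -- key construction: x in B, y in a tower whose class does not contain x
    have keyBT : ∀ (x y : V) (Sy : Set V), CanonClassIn G B Sy → x ∈ B → y ∈ T Sy →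
        x ∉ Sy → x ≠ y →
        ∃ N, IsPerfectMatchingSet (G ⊔ SimpleGraph.fromEdgeSet {s(x, y)}) N ∧ s(x, y) ∈ N := by
      clear hxy hadj hle x y
      intro x y Sy hSy hxB hyT hxSy hxy
      have hle : G ≤ G ⊔ SimpleGraph.fromEdgeSet {s(x, y)} := le_sup_left
      obtain ⟨s1, hs1B, hSydef⟩ := id hSy
      have hs1Sy : s1 ∈ Sy := by rw [hSydef]; exact ⟨hs1B, hs1B, Or.inl rfl⟩
      have hxs1 : x ≠ s1 := fun h => hxSy (by rw [hSydef]; exact ⟨hs1B, hxB, Or.inl h.symm⟩)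
      have hfac : Factorizable (G.induce (B \ {s1, x})) := by
        by_contra hc
        exact hxSy (by rw [hSydef]; exact ⟨hs1B, hxB, Or.inr hc⟩)
      obtain ⟨NB2, hNB2⟩ := pmon_of_factorizable hfac
      obtain ⟨t, htne, hte, htT, htset⟩ := pmon_partner (hf Sy hSy) hyT
      have hyB : y ∉ B := fun h => hTsub Sy hSy hyT h
      have htB : t ∉ B := fun h => hTsub Sy hSy htT h
      have hE1 : (⋃ S ∈ {S | CanonClassIn G B S} \ ({Sy} : Set (Set V)), T S) = Bᶜ \ T Sy := by
        rw [hcupE {Sy} (by simpa using hSy)]; simp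
      have P5 := pmon_mono hle (pmon_congr hE1 (htw {Sy}))
      have P4 := pmon_mono hle hNB2
      have P3 := pmon_mono hle (pmon_single (hjoin Sy hSy s1 hs1Sy t htT))
      have P2 := pmon_mono hle (pmon_congr
        (show T Sy \ {u | u ∈ s(y, t)} = T Sy \ ({y, t} : Set V) by rw [htset])
        (pmon_remove (hf Sy hSy) hte))
      have P1 : PMon (G ⊔ SimpleGraph.fromEdgeSet {s(x, y)}) {x, y} {s(x, y)} :=
        pmon_single (by rw [SimpleGraph.sup_adj, SimpleGraph.fromEdgeSet_adj]; exact Or.inr ⟨rfl, hxy⟩)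
      have d4 : Disjoint (B \ {s1, x}) (Bᶜ \ T Sy) :=
        disjoint_compl_right.mono Set.diff_subset Set.diff_subset
      have d3 : Disjoint ({s1, t} : Set V) ((B \ {s1, x}) ∪ (Bᶜ \ T Sy)) := by
        rw [Set.disjoint_left]
        intro v hv hv2
        simp only [Set.mem_insert_iff, Set.mem_singleton_iff] at hv
        simp only [Set.mem_union, Set.mem_diff, Set.mem_compl_iff, Set.mem_insert_iff,
          Set.mem_singleton_iff] at hv2
        rcases hv with rfl | rfl <;> tauto
      have d2 : Disjoint (T Sy \ {y, t}) (({s1, t} : Set V) ∪ ((B \ {s1, x}) ∪ (Bᶜ \ T Sy))) := by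
        rw [Set.disjoint_left]
        intro v hv hv2
        simp only [Set.mem_diff, Set.mem_insert_iff, Set.mem_singleton_iff] at hv
        obtain ⟨hvT, hvn⟩ := hv
        have h1 : v ∉ B := fun h => hTsub Sy hSy hvT h
        have h2 : v ≠ s1 := fun h => h1 (h ▸ hs1B)
        simp only [Set.mem_union, Set.mem_diff, Set.mem_compl_iff, Set.mem_insert_iff,
          Set.mem_singleton_iff] at hv2
        tauto
      have d1 : Disjoint ({x, y} : Set V)
          ((T Sy \ {y, t}) ∪ (({s1, t} : Set V) ∪ ((B \ {s1, x}) ∪ (Bᶜ \ T Sy)))) := by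
        rw [Set.disjoint_left]
        intro v hv hv2
        simp only [Set.mem_insert_iff, Set.mem_singleton_iff] at hv
        simp only [Set.mem_union, Set.mem_diff, Set.mem_compl_iff, Set.mem_insert_iff,
          Set.mem_singleton_iff] at hv2
        rcases hv with rfl | rfl
        · have h1 : v ∉ T Sy := fun h => hTsub Sy hSy h hxB
          have h2 : v ≠ t := fun h => htB (h ▸ hxB)
          tauto
        · have h1 : v ≠ s1 := fun h => hyB (h ▸ hs1B)
          have h2 : v ≠ t := fun h => htne h.symm
          tauto
      have hsupp : ({x, y} : Set V)
          ∪ ((T Sy \ {y, t}) ∪ (({s1, t} : Set V) ∪ ((B \ {s1, x}) ∪ (Bᶜ \ T Sy))))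
          = Set.univ := by
        apply Set.eq_univ_of_forall
        intro v
        simp only [Set.mem_union, Set.mem_diff, Set.mem_insert_iff, Set.mem_singleton_iff,
          Set.mem_compl_iff]
        by_cases hvB : v ∈ B
        · by_cases h1 : v = s1
          · tauto
          · by_cases h2 : v = x
            · tauto
            · tauto
        · by_cases hvT : v ∈ T Sy
          · by_cases h1 : v = y
            · tauto
            · by_cases h2 : v = t
              · tauto
              · tauto
          · tauto
      exact ⟨_, pm_of_pmon_univ (pmon_congr hsupp
        (pmon_union d1 P1 (pmon_union d2 P2 (pmon_union d3 P3 (pmon_union d4 P4 P5))))),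
        Set.mem_union_left _ rfl⟩
    -- key construction: x, y in towers of distinct classes, a ∈ Sx \ Sy
    have keyTT : ∀ (x y : V) (Sx Sy : Set V), CanonClassIn G B Sx → CanonClassIn G B Sy →
        Sx ≠ Sy → x ∈ T Sx → y ∈ T Sy → x ≠ y → ∀ a, a ∈ Sx → a ∉ Sy →
        ∃ N, IsPerfectMatchingSet (G ⊔ SimpleGraph.fromEdgeSet {s(x, y)}) N ∧ s(x, y) ∈ N := by
      clear hxy hadj hle x y
      intro x y Sx Sy hSx hSy hSS hxT hyT hxy a haSx haSy
      have hle : G ≤ G ⊔ SimpleGraph.fromEdgeSet {s(x, y)} := le_sup_left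
      obtain ⟨s1, hs1B, hSydef⟩ := id hSy
      obtain ⟨s0, hs0B, hSxdef⟩ := id hSx
      have hs1Sy : s1 ∈ Sy := by rw [hSydef]; exact ⟨hs1B, hs1B, Or.inl rfl⟩
      have haB : a ∈ B := by rw [hSxdef] at haSx; exact haSx.2.1
      have has1 : a ≠ s1 := fun h => haSy (by rw [hSydef]; exact ⟨hs1B, haB, Or.inl h.symm⟩)
      have hfac : Factorizable (G.induce (B \ {s1, a})) := by
        by_contra hc
        exact haSy (by rw [hSydef]; exact ⟨hs1B, haB, Or.inr hc⟩)
      obtain ⟨NB2, hNB2⟩ := pmon_of_factorizable hfac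
      obtain ⟨t, htnex, hte, htT, htset⟩ := pmon_partner (hf Sx hSx) hxT
      obtain ⟨t', htney, ht'e, ht'T, ht'set⟩ := pmon_partner (hf Sy hSy) hyT
      have hdisT : Disjoint (T Sx) (T Sy) := hTdis Sx Sy hSx hSy hSS
      have hxB : x ∉ B := fun h => hTsub Sx hSx hxT h
      have hyB : y ∉ B := fun h => hTsub Sy hSy hyT h
      have htB : t ∉ B := fun h => hTsub Sx hSx htT h
      have ht'B : t' ∉ B := fun h => hTsub Sy hSy ht'T h
      have htTy : t ∉ T Sy := fun h => (hdisT.ne_of_mem htT h) rfl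
      have ht'Tx : t' ∉ T Sx := fun h => (hdisT.ne_of_mem h ht'T) rfl
      have hxTy : x ∉ T Sy := fun h => (hdisT.ne_of_mem hxT h) rfl
      have hyTx : y ∉ T Sx := fun h => (hdisT.ne_of_mem h hyT) rfl
      have hE2 : (⋃ S ∈ {S | CanonClassIn G B S} \ ({Sx, Sy} : Set (Set V)), T S)
          = Bᶜ \ (T Sx ∪ T Sy) := by
        rw [hcupE {Sx, Sy} (by rintro S (rfl | rfl) <;> assumption)]
        congr 1
        simp
      have P7 := pmon_mono hle (pmon_congr hE2 (htw {Sx, Sy}))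
      have P6 := pmon_mono hle hNB2
      have P5 := pmon_mono hle (pmon_single (hjoin Sy hSy s1 hs1Sy t' ht'T))
      have P4 := pmon_mono hle (pmon_congr
        (show T Sy \ {u | u ∈ s(y, t')} = T Sy \ ({y, t'} : Set V) by rw [ht'set])
        (pmon_remove (hf Sy hSy) ht'e))
      have P3 := pmon_mono hle (pmon_single (hjoin Sx hSx a haSx t htT))
      have P2 := pmon_mono hle (pmon_congr
        (show T Sx \ {u | u ∈ s(x, t)} = T Sx \ ({x, t} : Set V) by rw [htset])
        (pmon_remove (hf Sx hSx) hte))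
      have P1 : PMon (G ⊔ SimpleGraph.fromEdgeSet {s(x, y)}) {x, y} {s(x, y)} :=
        pmon_single (by rw [SimpleGraph.sup_adj, SimpleGraph.fromEdgeSet_adj]; exact Or.inr ⟨rfl, hxy⟩)
      have d6 : Disjoint (B \ {s1, a}) (Bᶜ \ (T Sx ∪ T Sy)) :=
        disjoint_compl_right.mono Set.diff_subset Set.diff_subset
      have d5 : Disjoint ({s1, t'} : Set V) ((B \ {s1, a}) ∪ (Bᶜ \ (T Sx ∪ T Sy))) := by
        rw [Set.disjoint_left]
        intro v hv hv2
        simp only [Set.mem_insert_iff, Set.mem_singleton_iff] at hv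
        simp only [Set.mem_union, Set.mem_diff, Set.mem_compl_iff, Set.mem_insert_iff,
          Set.mem_singleton_iff] at hv2
        rcases hv with rfl | rfl <;> tauto
      have d4 : Disjoint (T Sy \ {y, t'})
          (({s1, t'} : Set V) ∪ ((B \ {s1, a}) ∪ (Bᶜ \ (T Sx ∪ T Sy)))) := by
        rw [Set.disjoint_left]
        intro v hv hv2
        simp only [Set.mem_diff, Set.mem_insert_iff, Set.mem_singleton_iff] at hv
        obtain ⟨hvT, hvn⟩ := hv
        have h1 : v ∉ B := fun h => hTsub Sy hSy hvT h
        have h2 : v ≠ s1 := fun h => h1 (h ▸ hs1B)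
        simp only [Set.mem_union, Set.mem_diff, Set.mem_compl_iff, Set.mem_insert_iff,
          Set.mem_singleton_iff] at hv2
        tauto
      have d3 : Disjoint ({a, t} : Set V) ((T Sy \ {y, t'}) ∪
          (({s1, t'} : Set V) ∪ ((B \ {s1, a}) ∪ (Bᶜ \ (T Sx ∪ T Sy))))) := by
        rw [Set.disjoint_left]
        intro v hv hv2
        simp only [Set.mem_insert_iff, Set.mem_singleton_iff] at hv
        simp only [Set.mem_union, Set.mem_diff, Set.mem_compl_iff, Set.mem_insert_iff,
          Set.mem_singleton_iff] at hv2
        rcases hv with rfl | rfl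
        · have h1 : v ∉ T Sy := fun h => hTsub Sy hSy h haB
          have h2 : v ≠ t' := fun h => ht'B (h ▸ haB)
          tauto
        · have h1 : v ≠ s1 := fun h => htB (h ▸ hs1B)
          have h2 : v ≠ t' := fun h => htTy (h ▸ ht'T)
          tauto
      have d2 : Disjoint (T Sx \ {x, t}) ((({a, t} : Set V)) ∪ ((T Sy \ {y, t'}) ∪
          (({s1, t'} : Set V) ∪ ((B \ {s1, a}) ∪ (Bᶜ \ (T Sx ∪ T Sy)))))) := by
        rw [Set.disjoint_left]
        intro v hv hv2
        simp only [Set.mem_diff, Set.mem_insert_iff, Set.mem_singleton_iff] at hv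
        obtain ⟨hvT, hvn⟩ := hv
        have h1 : v ∉ B := fun h => hTsub Sx hSx hvT h
        have h2 : v ≠ s1 := fun h => h1 (h ▸ hs1B)
        have h3 : v ≠ a := fun h => h1 (h ▸ haB)
        have h4 : v ∉ T Sy := fun h => (hdisT.ne_of_mem hvT h) rfl
        have h5 : v ≠ t' := fun h => h4 (h ▸ ht'T)
        simp only [Set.mem_union, Set.mem_diff, Set.mem_compl_iff, Set.mem_insert_iff,
          Set.mem_singleton_iff] at hv2
        tauto
      have d1 : Disjoint ({x, y} : Set V) ((T Sx \ {x, t}) ∪ ((({a, t} : Set V)) ∪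
          ((T Sy \ {y, t'}) ∪ (({s1, t'} : Set V) ∪
            ((B \ {s1, a}) ∪ (Bᶜ \ (T Sx ∪ T Sy))))))) := by
        rw [Set.disjoint_left]
        intro v hv hv2
        simp only [Set.mem_insert_iff, Set.mem_singleton_iff] at hv
        simp only [Set.mem_union, Set.mem_diff, Set.mem_compl_iff, Set.mem_insert_iff,
          Set.mem_singleton_iff] at hv2
        rcases hv with rfl | rfl
        · have h1 : v ≠ a := fun h => hxB (h ▸ haB)
          have h2 : v ≠ t := fun h => htnex h.symm
          have h3 : v ≠ s1 := fun h => hxB (h ▸ hs1B)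
          have h4 : v ≠ t' := fun h => hxTy (h ▸ ht'T)
          tauto
        · have h1 : v ≠ a := fun h => hyB (h ▸ haB)
          have h2 : v ≠ t := fun h => hyTx (h ▸ htT)
          have h3 : v ≠ s1 := fun h => hyB (h ▸ hs1B)
          have h4 : v ≠ t' := fun h => htney h.symm
          tauto
      have hsupp : ({x, y} : Set V) ∪ ((T Sx \ {x, t}) ∪ ((({a, t} : Set V)) ∪
          ((T Sy \ {y, t'}) ∪ (({s1, t'} : Set V) ∪
            ((B \ {s1, a}) ∪ (Bᶜ \ (T Sx ∪ T Sy))))))) = Set.univ := by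
        apply Set.eq_univ_of_forall
        intro v
        simp only [Set.mem_union, Set.mem_diff, Set.mem_insert_iff, Set.mem_singleton_iff,
          Set.mem_compl_iff]
        by_cases hvB : v ∈ B
        · by_cases h1 : v = s1
          · tauto
          · by_cases h2 : v = a
            · tauto
            · tauto
        · by_cases hvT : v ∈ T Sx
          · by_cases h1 : v = x
            · tauto
            · by_cases h2 : v = t
              · tauto
              · tauto
          · by_cases hvT' : v ∈ T Sy
            · by_cases h1 : v = y
              · tauto
              · by_cases h2 : v = t'
                · tauto
                · tauto
            · tauto
      exact ⟨_, pm_of_pmon_univ (pmon_congr hsupp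
        (pmon_union d1 P1 (pmon_union d2 P2 (pmon_union d3 P3 (pmon_union d4 P4
          (pmon_union d5 P5 (pmon_union d6 P6 P7))))))),
        Set.mem_union_left _ rfl⟩
    -- dispatch on locations of x and y
    have hloc : ∀ v : V, v ∈ B ∨ ∃ S, CanonClassIn G B S ∧ v ∈ T S := fun v => by
      by_cases h : v ∈ B
      · exact Or.inl h
      · exact Or.inr (hTcover v h)
    rcases hloc x with hxB | ⟨Sx, hSx, hxT⟩
    · rcases hloc y with hyB | ⟨Sy, hSy, hyT⟩
      · -- both in B
        obtain ⟨NB', hNB', hmem⟩ := saturated_extract hBsat hxB hyB hxy hadj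
        exact ⟨_, pm_of_pmon_univ (pmon_congr (Set.union_compl_self B)
          (pmon_union disjoint_compl_right hNB' (pmon_mono hle (pmon_congr hE0 (htw ∅))))),
          Set.mem_union_left _ hmem⟩
      · -- x ∈ B, y in a tower
        exact keyBT x y Sy hSy hxB hyT (fun h => hadj (hjoin Sy hSy x h y hyT)) hxy
    · rcases hloc y with hyB | ⟨Sy, hSy, hyT⟩
      · -- y ∈ B, x in a tower
        obtain ⟨N, hN, hm⟩ := keyBT y x Sx hSx hyB hxT
          (fun h => hadj (hjoin Sx hSx y h x hxT).symm) hxy.symm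
        have hswap : s(y, x) = s(x, y) := Sym2.eq_swap
        rw [hswap] at hN hm
        exact ⟨N, hN, hm⟩
      · by_cases hSS : Sx = Sy
        · -- same tower
          subst hSS
          obtain ⟨N', hN', hmem⟩ := saturated_extract (hTsat Sx hSx) hxT hyT hxy hadj
          have hE1 : (⋃ S ∈ {S | CanonClassIn G B S} \ ({Sx} : Set (Set V)), T S)
              = Bᶜ \ T Sx := by
            rw [hcupE {Sx} (by simpa using hSx)]; simp
          have inner := pmon_congr (Set.union_diff_cancel (hTsub Sx hSx))
            (pmon_union Set.disjoint_sdiff_right hN'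
              (pmon_mono hle (pmon_congr hE1 (htw {Sx}))))
          exact ⟨_, pm_of_pmon_univ (pmon_congr (Set.union_compl_self B)
            (pmon_union disjoint_compl_right (pmon_mono hle hNB) inner)),
            Set.mem_union_right _ (Set.mem_union_left _ hmem)⟩
        · -- different towers
          have hdiff : (∃ a, a ∈ Sx ∧ a ∉ Sy) ∨ (∃ a, a ∈ Sy ∧ a ∉ Sx) := by
            by_contra h
            push_neg at h
            exact hSS (Set.Subset.antisymm h.1 h.2)
          rcases hdiff with ⟨a, haSx, haSy⟩ | ⟨a, haSy, haSx⟩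
          · exact keyTT x y Sx Sy hSx hSy hSS hxT hyT hxy a haSx haSy
          · obtain ⟨N, hN, hm⟩ := keyTT y x Sy Sx hSy hSx (Ne.symm hSS) hyT hxT hxy.symm
              a haSy haSx
            have hswap : s(y, x) = s(x, y) := Sym2.eq_swap
            rw [hswap] at hN hm
            exact ⟨N, hN, hm⟩
end
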